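/- arXiv:2208.06214 — 6 statements merged into one kernel-verified Lean document; each statement's English description precedes it below -/
import Mathlib

section
/- Let (s,t) ∈ ℂ² with s ≠ 0 and t ≠ 0, and define K_w^{(s,t)}(z) = (1/√s) exp[(t z² - conj(t w²) + 2 z w̄)/(2s)]. Then K_w^{(s,t)} belongs to the Fock space F² if and only if |s| > |t|. -/
open MeasureTheory Complex

lemma integrable_exp_quad {c : ℝ} (hc : 0 < c) (β : ℝ) :
    Integrable fun x : ℝ => Real.exp (-c * x ^ 2 + β * x) := by
  have h := (integrable_cexp_quadratic (b := (c : ℂ)) (by simpa using hc) (β : ℂ) 0).norm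
  refine h.congr (Filter.Eventually.of_forall fun x => ?_)
  show ‖Complex.exp (-(c:ℂ) * (x:ℂ) ^ 2 + (β:ℂ) * x + 0)‖ = Real.exp (-c * x ^ 2 + β * x)
  rw [show -(c:ℂ) * (x:ℂ) ^ 2 + (β:ℂ) * x + 0 = ((-c * x ^ 2 + β * x : ℝ) : ℂ) by
    push_cast; ring]
  rw [Complex.norm_exp, Complex.ofReal_re]

lemma not_integrable_exp_lin (β : ℝ) : ¬ Integrable (fun x : ℝ => Real.exp (β * x)) := by
  intro h
  rcases le_or_gt 0 β with hβ | hβ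
  · have h1 : Integrable (fun _ : ℝ => (1:ℝ)) (volume.restrict (Set.Ioi (0:ℝ))) := by
      refine (h.restrict (s := Set.Ioi 0)).mono aestronglyMeasurable_const ?_
      filter_upwards [ae_restrict_mem measurableSet_Ioi] with x hx
      have : (0:ℝ) ≤ β * x := mul_nonneg hβ (le_of_lt hx)
      simp [Real.norm_eq_abs, abs_of_pos (Real.exp_pos _), Real.one_le_exp this]
    rw [integrable_const_iff] at h1
    simp [isFiniteMeasure_restrict] at h1
  · have h1 : Integrable (fun _ : ℝ => (1:ℝ)) (volume.restrict (Set.Iio (0:ℝ))) := by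
      refine (h.restrict (s := Set.Iio 0)).mono aestronglyMeasurable_const ?_
      filter_upwards [ae_restrict_mem measurableSet_Iio] with x hx
      have : (0:ℝ) ≤ β * x := le_of_lt (mul_pos_of_neg_of_neg hβ hx)
      simp [Real.norm_eq_abs, abs_of_pos (Real.exp_pos _), Real.one_le_exp this]
    rw [integrable_const_iff] at h1
    simp [isFiniteMeasure_restrict] at h1

lemma prod_form (r β₁ β₂ : ℝ) (hr0 : 0 ≤ r) :
    (Integrable (fun p : ℝ × ℝ =>
        Real.exp (-(1-r) * p.1 ^ 2 + β₁ * p.1) * Real.exp (-(1+r) * p.2 ^ 2 + β₂ * p.2))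
      ↔ r < 1) := by
  constructor
  · intro h
    by_contra hlt
    push_neg at hlt
    rw [Measure.volume_eq_prod ℝ ℝ] at h
    have hae := h.prod_left_ae
    have hne : (volume : Measure ℝ) ≠ 0 := by
      intro h0
      have := congrArg (fun μ : Measure ℝ => μ (Set.Ioo 0 1)) h0
      simp [Real.volume_Ioo] at this
    haveI := ae_neBot.mpr hne
    obtain ⟨y, hy⟩ := hae.exists
    have hf1 : Integrable (fun x : ℝ => Real.exp (-(1-r) * x ^ 2 + β₁ * x)) := by
      have h2 := hy.mul_const (Real.exp (-(1+r) * y ^ 2 + β₂ * y))⁻¹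
      refine h2.congr (Filter.Eventually.of_forall fun x => ?_)
      show Real.exp (-(1 - r) * (x, y).1 ^ 2 + β₁ * (x, y).1) * Real.exp (-(1 + r) * (x, y).2 ^ 2 + β₂ * (x, y).2) * (Real.exp (-(1 + r) * y ^ 2 + β₂ * y))⁻¹ = Real.exp (-(1 - r) * x ^ 2 + β₁ * x)
      rw [mul_assoc, mul_inv_cancel₀ (Real.exp_ne_zero _), mul_one]
    have hint : Integrable (fun x : ℝ => Real.exp (β₁ * x)) := by
      refine hf1.mono
        ((Real.continuous_exp.comp (continuous_const.mul continuous_id)).aestronglyMeasurable) ?_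
      refine Filter.Eventually.of_forall fun x => ?_
      rw [Real.norm_eq_abs, Real.norm_eq_abs, abs_of_pos (Real.exp_pos _),
        abs_of_pos (Real.exp_pos _)]
      apply Real.exp_le_exp.2
      nlinarith [sq_nonneg x]
    exact not_integrable_exp_lin β₁ hint
  · intro h1
    rw [Measure.volume_eq_prod ℝ ℝ]
    exact (integrable_exp_quad (by linarith) β₁).mul_prod (integrable_exp_quad (by linarith) β₂)

lemma core (a b : ℂ) :
    Integrable (fun z : ℂ => Real.exp ((a * z ^ 2 + b * z).re - ‖z‖ ^ 2)) ↔
      ‖a‖ < 1 := by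
  set r := ‖a‖ with hr
  set u : Circle := Circle.exp (-(a.arg / 2)) with hudef
  have hua : (u:ℂ) ^ 2 * a = (r : ℂ) := by
    have h2 : (u:ℂ) ^ 2 = Complex.exp (-(a.arg) * Complex.I) := by
      rw [hudef, Circle.coe_exp, ← Complex.exp_nat_mul]
      push_cast
      ring_nf
    have ha : a = (‖a‖ : ℂ) * Complex.exp (a.arg * Complex.I) :=
      (Complex.norm_mul_exp_arg_mul_I a).symm
    calc (u:ℂ) ^ 2 * a
        = Complex.exp (-(a.arg:ℂ) * Complex.I) *
            ((‖a‖ : ℂ) * Complex.exp ((a.arg:ℂ) * Complex.I)) := by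
          rw [h2, ← ha]
      _ = (r : ℂ) * Complex.exp (-(a.arg:ℂ) * Complex.I + (a.arg:ℂ) * Complex.I) := by
          rw [Complex.exp_add, hr]; ring
      _ = (r : ℂ) := by
          rw [show -(a.arg:ℂ) * Complex.I + (a.arg:ℂ) * Complex.I = 0 by ring,
            Complex.exp_zero, mul_one]
  have habs : ∀ z : ℂ, ‖(u:ℂ) * z‖ = ‖z‖ := by
    intro z; rw [norm_mul, Circle.norm_coe, one_mul]
  rw [← MeasureTheory.integrable_comp (rotation u)]
  rw [← (Complex.volume_preserving_equiv_real_prod.symm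
      Complex.measurableEquivRealProd).integrable_comp_emb
      Complex.measurableEquivRealProd.symm.measurableEmbedding]
  have hfun : ((fun z : ℂ => Real.exp ((a * z ^ 2 + b * z).re - ‖z‖ ^ 2))
        ∘ rotation u) ∘ Complex.measurableEquivRealProd.symm
      = fun p : ℝ × ℝ =>
        Real.exp (-(1-r) * p.1 ^ 2 + (b * u).re * p.1) *
        Real.exp (-(1+r) * p.2 ^ 2 + (-(b * u).im) * p.2) := by
    funext p
    obtain ⟨x, y⟩ := p
    simp only [Function.comp_apply, Complex.measurableEquivRealProd_symm_apply,
      rotation_apply]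
    set z : ℂ := ⟨x, y⟩ with hz
    have hzre : z.re = x := rfl
    have hzim : z.im = y := rfl
    have h1 : a * ((u:ℂ) * z) ^ 2 = (r : ℂ) * z ^ 2 := by
      rw [mul_pow, ← hua]; ring
    have h2 : ‖(u:ℂ) * z‖ ^ 2 = x ^ 2 + y ^ 2 := by
      rw [habs, Complex.sq_norm, Complex.normSq_apply, hzre, hzim]; ring
    rw [h1, h2, ← Real.exp_add]
    congr 1
    rw [show b * ((u:ℂ) * z) = (b * (u:ℂ)) * z by ring]
    simp only [Complex.add_re, Complex.mul_re, Complex.ofReal_re, Complex.ofReal_im,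
      pow_two, Complex.mul_im, hzre, hzim]
    ring
  rw [hfun, prod_form _ _ _ (hr ▸ norm_nonneg a)]

/-- The Gaussian measure dλ(z) = (1/π) e^{-|z|²} dA(z) on ℂ. -/
noncomputable def gaussMeasure : Measure ℂ :=
  volume.withDensity (fun z => ENNReal.ofReal (Real.exp (-(‖z‖)^2) / Real.pi))

/-- The principal complex square root. -/
noncomputable def csqrt (z : ℂ) : ℂ := z ^ ((1:ℂ)/2)

/-- The two-parameter kernel K^{(s,t)}(z,w). -/
noncomputable def Kst (s t z w : ℂ) : ℂ :=
  (csqrt s)⁻¹ *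
    Complex.exp ((t*z^2 - starRingEnd ℂ (t*w^2) + 2*z*(starRingEnd ℂ w)) / (2*s))

/-- Membership in the Fock space F²: entire and square integrable w.r.t. dλ. -/
def MemFock (f : ℂ → ℂ) : Prop :=
  Differentiable ℂ f ∧ Integrable (fun z => (‖f z‖)^2) gaussMeasure

theorem kernel_in_Fock_iff (s t : ℂ) (hs : s ≠ 0) (ht : t ≠ 0) (w : ℂ) :
    MemFock (fun z => Kst s t z w) ↔ ‖t‖ < ‖s‖ := by
  have hdiff : Differentiable ℂ fun z => Kst s t z w := by
    unfold Kst
    apply Differentiable.const_mul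
    apply Differentiable.cexp
    apply Differentiable.div_const
    exact (((differentiable_const t).mul (differentiable_pow 2)).sub
      (differentiable_const _)).add
      (((differentiable_const 2).mul differentiable_id).mul (differentiable_const _))
  set a : ℂ := t / s with hadef
  set b : ℂ := 2 * (starRingEnd ℂ w) / s with hbdef
  set c₀ : ℂ := -(starRingEnd ℂ (t * w ^ 2)) / s with hcdef
  have hsq : ‖csqrt s‖ ≠ 0 := by
    simp only [ne_eq, norm_eq_zero, csqrt]
    rw [Complex.cpow_eq_zero_iff]
    simp [hs]
  have hsqpos : 0 < ‖csqrt s‖ := lt_of_le_of_ne (norm_nonneg _) (Ne.symm hsq)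
  set C : ℝ := (‖csqrt s‖ ^ 2)⁻¹ * Real.exp c₀.re / Real.pi with hCdef
  have hC : 0 < C := by positivity
  have hpt : ∀ z : ℂ, (‖Kst s t z w‖) ^ 2 *
      (ENNReal.ofReal (Real.exp (-(‖z‖) ^ 2) / Real.pi)).toReal
      = C * Real.exp ((a * z ^ 2 + b * z).re - ‖z‖ ^ 2) := by
    intro z
    rw [ENNReal.toReal_ofReal (by positivity)]
    set u : ℂ := (t * z ^ 2 - starRingEnd ℂ (t * w ^ 2) + 2 * z * starRingEnd ℂ w) / (2 * s)
      with hu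
    have hexp : u.re + u.re = (a * z ^ 2 + b * z).re + c₀.re := by
      have h2u : u + u = a * z ^ 2 + b * z + c₀ := by
        rw [hu, hadef, hbdef, hcdef]
        field_simp
        ring
      have := congrArg Complex.re h2u
      simpa [Complex.add_re] using this
    have habsK : ‖Kst s t z w‖ ^ 2
        = (‖csqrt s‖ ^ 2)⁻¹ * Real.exp (u.re + u.re) := by
      rw [Kst, norm_mul, norm_inv, Complex.norm_exp, mul_pow, inv_pow, ← hu, sq (Real.exp u.re),
        ← Real.exp_add]
    rw [habsK, hexp, hCdef]
    rw [show (a * z ^ 2 + b * z).re - ‖z‖ ^ 2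
      = (a * z ^ 2 + b * z).re + (-(‖z‖) ^ 2) by ring]
    rw [Real.exp_add, Real.exp_add]
    ring
  have hmeas : Measurable fun z : ℂ => ENNReal.ofReal (Real.exp (-‖z‖ ^ 2) / Real.pi) := by
    exact (((Real.continuous_exp.comp ((continuous_norm.pow 2).neg)).div_const
      Real.pi).measurable).ennreal_ofReal
  have key : Integrable (fun z => (‖Kst s t z w‖) ^ 2) gaussMeasure ↔
      ‖t‖ < ‖s‖ := by
    rw [gaussMeasure, integrable_withDensity_iff hmeas
      (Filter.Eventually.of_forall fun z => ENNReal.ofReal_lt_top)]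
    simp only [hpt]
    rw [integrable_const_mul_iff (Ne.isUnit hC.ne'), core a b]
    rw [hadef, norm_div, div_lt_one (norm_pos_iff.mpr hs)]
  exact ⟨fun h => key.1 h.2, fun h => ⟨hdiff, key.2 h⟩⟩
end

section
/- Let (s,t) ∈ ℂ² with |s| > |t|. Then the F²-norm of the kernel K_w^{(s,t)} satisfies ‖K_w^{(s,t)}‖ = (|s|² - |t|²)^{-1/4} · exp[|w|²/(2(|s|² - |t|²))] · |exp[t(|t|² + 1 - |s|²) w² / (2 s̄ (|s|² - |t|²))]|. -/
open MeasureTheory Complex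
open scoped ENNReal NNReal

lemma cast_quad (b c d x : ℝ) : (b:ℂ) * (x:ℂ) ^ 2 + (c:ℂ) * x + d = ((b*x^2 + c*x + d : ℝ) : ℂ) := by
  push_cast; ring

lemma real_gauss_integrable (b c d : ℝ) (hb : b < 0) :
    Integrable (fun x : ℝ => Real.exp (b*x^2 + c*x + d)) := by
  have h := (integrable_cexp_quadratic' (b := (b:ℂ)) (by simpa using hb) c d).norm
  convert h using 2 with x
  rw [cast_quad, Complex.norm_exp, Complex.ofReal_re]

example (f : ℝ → ℝ) : ∫ x : ℝ, ((f x : ℝ) : ℂ) = ((∫ x : ℝ, f x : ℝ) : ℂ) := integral_ofReal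

lemma real_gauss (b c d : ℝ) (hb : b < 0) :
    ∫ x : ℝ, Real.exp (b*x^2 + c*x + d)
      = Real.sqrt (Real.pi / (-b)) * Real.exp (d - c^2/(4*b)) := by
  have key := integral_cexp_quadratic (b := (b:ℂ)) (by simpa using hb) c d
  simp only [cast_quad, ← Complex.ofReal_exp] at key
  rw [show (∫ x : ℝ, ((Real.exp (b*x^2+c*x+d) : ℝ) : ℂ))
      = ((∫ x : ℝ, Real.exp (b*x^2+c*x+d) : ℝ) : ℂ) from integral_ofReal] at key
  have h2 : ((Real.pi : ℂ) / -(b:ℂ)) ^ ((1:ℂ)/2) = ((Real.sqrt (Real.pi / (-b)) : ℝ) : ℂ) := by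
    rw [show ((Real.pi : ℂ) / -(b:ℂ)) = ((Real.pi / (-b) : ℝ) : ℂ) by push_cast; ring,
      show ((1:ℂ)/2) = ((1/2 : ℝ) : ℂ) by norm_num,
      ← Complex.ofReal_cpow (div_pos Real.pi_pos (neg_pos.mpr hb)).le, ← Real.sqrt_eq_rpow]
  have h3 : ((d:ℂ) - (c:ℂ)^2/(4*(b:ℂ))) = ((d - c^2/(4*b) : ℝ) : ℂ) := by push_cast; ring
  rw [h2, h3, ← Complex.ofReal_exp, ← Complex.ofReal_mul] at key
  exact_mod_cast key
lemma lint_gauss (b c d : ℝ) (hb : b < 0) :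
    ∫⁻ x : ℝ, ENNReal.ofReal (Real.exp (b*x^2 + c*x + d))
      = ENNReal.ofReal (Real.sqrt (Real.pi / (-b)) * Real.exp (d - c^2/(4*b))) := by
  rw [← ofReal_integral_eq_lintegral_ofReal (real_gauss_integrable b c d hb)
      (Filter.Eventually.of_forall fun x => (Real.exp_pos _).le), real_gauss b c d hb]

lemma core_s3 (p q u v g : ℝ) (h : p^2 + q^2 < 1) :
    ∫⁻ x : ℝ, ∫⁻ y : ℝ, ENNReal.ofReal
        (Real.exp ((p-1)*x^2 - (p+1)*y^2 - 2*q*x*y + 2*u*x - 2*v*y + g))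
    = ENNReal.ofReal (Real.pi / Real.sqrt (1-p^2-q^2) *
        Real.exp (g + (u^2*(1+p) + 2*q*u*v + v^2*(1-p))/(1-p^2-q^2))) := by
  have hq : 0 ≤ q^2 := sq_nonneg q
  have hp2 : p^2 < 1 := by linarith
  have habs : |p| < 1 := by
    rw [← Real.sqrt_one, ← Real.sqrt_sq_eq_abs]
    exact Real.sqrt_lt_sqrt (sq_nonneg p) (by linarith)
  have hp1 : p < 1 := (abs_lt.mp habs).2
  have hpm : -1 < p := (abs_lt.mp habs).1
  have hp1' : (0:ℝ) < 1 + p := by linarith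
  have hD : (0:ℝ) < 1 - p^2 - q^2 := by linarith
  have h1p : (1:ℝ) + p ≠ 0 := ne_of_gt hp1'
  have hDne : (1:ℝ) - p^2 - q^2 ≠ 0 := ne_of_gt hD
  have h4 : (-4 - p*4 : ℝ) ≠ 0 := fun hh => h1p (by linarith)
  have inner : ∀ x : ℝ, (∫⁻ y : ℝ, ENNReal.ofReal
      (Real.exp ((p-1)*x^2 - (p+1)*y^2 - 2*q*x*y + 2*u*x - 2*v*y + g)))
      = ENNReal.ofReal (Real.sqrt (Real.pi / (1+p)))
        * ENNReal.ofReal (Real.exp ((((p-1) + q^2/(1+p)))*x^2 + (2*u + 2*q*v/(1+p))*x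
            + (g + v^2/(1+p)))) := by
    intro x
    have e1 : ∀ y : ℝ, (p-1)*x^2 - (p+1)*y^2 - 2*q*x*y + 2*u*x - 2*v*y + g
        = (-(p+1))*y^2 + (-2*q*x - 2*v)*y + ((p-1)*x^2 + 2*u*x + g) := by intro y; ring
    simp_rw [e1]
    rw [lint_gauss _ _ _ (by linarith)]
    rw [ENNReal.ofReal_mul (Real.sqrt_nonneg _)]
    congr 2
    · congr 1; ring
    · congr 1
      rw [show (4*(-(p+1)) : ℝ) = -(4*(1+p)) by ring, div_neg, sub_neg_eq_add]
      field_simp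
      ring
  simp_rw [inner]
  rw [lintegral_const_mul' _ _ ENNReal.ofReal_ne_top]
  have hB : ((p-1) + q^2/(1+p)) < 0 := by
    have : ((p-1) + q^2/(1+p)) = -((1-p^2-q^2)/(1+p)) := by field_simp; ring
    rw [this]
    exact neg_neg_of_pos (div_pos hD hp1')
  rw [lint_gauss _ _ _ hB, ← ENNReal.ofReal_mul (Real.sqrt_nonneg _)]
  congr 1
  rw [← mul_assoc]
  have hnegB : -((p-1) + q^2/(1+p)) = (1-p^2-q^2)/(1+p) := by field_simp; ring
  have hc : Real.sqrt (Real.pi/(1+p)) * Real.sqrt (Real.pi / -((p-1) + q^2/(1+p)))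
      = Real.pi / Real.sqrt (1-p^2-q^2) := by
    rw [hnegB, div_div_eq_mul_div, ← Real.sqrt_mul (by positivity), div_mul_div_comm,
      show Real.pi * (Real.pi*(1+p)) = Real.pi^2 * (1+p) by ring,
      show ((1+p)*(1-p^2-q^2) : ℝ) = (1-p^2-q^2)*(1+p) by ring,
      mul_div_mul_right _ _ h1p, Real.sqrt_div (sq_nonneg _), Real.sqrt_sq Real.pi_pos.le]
  rw [hc]
  congr 1
  rw [show (4*((p-1) + q^2/(1+p)) : ℝ) = -(4*((1-p^2-q^2)/(1+p))) by
      rw [← hnegB]; ring, div_neg, sub_neg_eq_add]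
  congr 1
  field_simp
  ring

-- pointwise formula for |Kst|^2
lemma kst_abs_sq (s t w : ℂ) (hs : s ≠ 0) (z : ℂ) :
    (‖Kst s t z w‖)^2
    = (‖s‖)⁻¹ * Real.exp
        ((((t/s)*z^2 + 2*((starRingEnd ℂ w)/s)*z + (-(starRingEnd ℂ (t*w^2))/s)).re)) := by
  have hA : 0 < ‖s‖ := norm_pos_iff.mpr hs
  rw [Kst, norm_mul, norm_inv, mul_pow, Complex.norm_exp]
  have h1 : ‖csqrt s‖ = (‖s‖) ^ ((1:ℝ)/2) := by
    rw [csqrt, Complex.norm_cpow_of_ne_zero hs]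
    norm_num
  have h2 : ((‖s‖ ^ ((1:ℝ)/2))⁻¹)^2 = (‖s‖)⁻¹ := by
    rw [inv_pow, ← Real.rpow_natCast (‖s‖ ^ ((1:ℝ)/2)) 2,
      ← Real.rpow_mul hA.le]
    norm_num
  rw [h1, h2]
  congr 1
  rw [← Real.exp_nat_mul]
  congr 1
  have h3 : ((2:ℕ):ℝ) * ((t*z^2 - starRingEnd ℂ (t*w^2) + 2*z*(starRingEnd ℂ w)) / (2*s)).re
      = ((2:ℂ) * ((t*z^2 - starRingEnd ℂ (t*w^2) + 2*z*(starRingEnd ℂ w)) / (2*s))).re := by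
    simp [Complex.mul_re]
  rw [h3]
  congr 1
  field_simp
  ring

lemma gauss_int (c p q u v g : ℝ) (hc : 0 ≤ c) (h : p^2+q^2 < 1) :
    ∫ z : ℂ, c * Real.exp (p*(z.re^2-z.im^2) - 2*q*(z.re*z.im) + 2*u*z.re - 2*v*z.im + g)
        ∂gaussMeasure
    = c / Real.pi * (Real.pi / Real.sqrt (1-p^2-q^2) *
        Real.exp (g + (u^2*(1+p) + 2*q*u*v + v^2*(1-p))/(1-p^2-q^2))) := by
  have hcont : ∀ (a₀ a₁ a₂ a₃ a₄ a₅ : ℝ), Continuous (fun z : ℂ =>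
      a₀*z.re^2 + a₁*z.im^2 + a₂*(z.re*z.im) + a₃*z.re + a₄*z.im + a₅) := by
    intro a₀ a₁ a₂ a₃ a₄ a₅
    fun_prop
  have hρ : Measurable fun z : ℂ => (Real.exp (-‖z‖^2) / Real.pi).toNNReal := by
    apply Measurable.real_toNNReal
    exact ((Real.continuous_exp.comp ((continuous_norm.pow 2).neg)).div_const _).measurable
  rw [gaussMeasure, show (fun z : ℂ => ENNReal.ofReal (Real.exp (-‖z‖^2) / Real.pi))
      = (fun z : ℂ => ((Real.exp (-‖z‖^2) / Real.pi).toNNReal : ℝ≥0∞)) from rfl,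
    integral_withDensity_eq_integral_smul hρ]
  have hpt : ∀ z : ℂ, (Real.exp (-‖z‖^2) / Real.pi).toNNReal •
      (c * Real.exp (p*(z.re^2-z.im^2) - 2*q*(z.re*z.im) + 2*u*z.re - 2*v*z.im + g))
      = (c/Real.pi) * Real.exp ((p-1)*z.re^2 - (p+1)*z.im^2 - 2*q*(z.re*z.im)
          + 2*u*z.re - 2*v*z.im + g) := by
    intro z
    have habs : ‖z‖^2 = z.re^2 + z.im^2 := by
      rw [Complex.sq_norm, Complex.normSq_apply]; ring
    rw [NNReal.smul_def, Real.coe_toNNReal _ (by positivity), habs, smul_eq_mul]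
    rw [show Real.exp (-(z.re^2+z.im^2))/Real.pi *
        (c * Real.exp (p*(z.re^2-z.im^2) - 2*q*(z.re*z.im) + 2*u*z.re - 2*v*z.im + g))
      = (c/Real.pi) * (Real.exp (-(z.re^2+z.im^2)) *
          Real.exp (p*(z.re^2-z.im^2) - 2*q*(z.re*z.im) + 2*u*z.re - 2*v*z.im + g)) by ring,
      ← Real.exp_add]
    congr 2
    ring
  simp_rw [hpt]
  rw [integral_eq_lintegral_of_nonneg_ae
    (Filter.Eventually.of_forall (fun z => by positivity))
    (Continuous.aestronglyMeasurable (by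
      apply Continuous.mul continuous_const
      apply Real.continuous_exp.comp
      have := hcont (p-1) (-(p+1)) (-2*q) (2*u) (-2*v) g
      convert this using 2 with z
      ring))]
  have hG : Measurable fun pr : ℝ × ℝ => ENNReal.ofReal ((c/Real.pi) *
      Real.exp ((p-1)*pr.1^2 - (p+1)*pr.2^2 - 2*q*(pr.1*pr.2) + 2*u*pr.1 - 2*v*pr.2 + g)) := by
    apply Measurable.ennreal_ofReal
    apply Measurable.const_mul
    apply Measurable.exp
    fun_prop
  have hcomp : ∀ z : ℂ, ENNReal.ofReal ((c/Real.pi) * Real.exp ((p-1)*z.re^2 - (p+1)*z.im^2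
      - 2*q*(z.re*z.im) + 2*u*z.re - 2*v*z.im + g))
      = (fun pr : ℝ × ℝ => ENNReal.ofReal ((c/Real.pi) *
          Real.exp ((p-1)*pr.1^2 - (p+1)*pr.2^2 - 2*q*(pr.1*pr.2) + 2*u*pr.1 - 2*v*pr.2 + g)))
        (Complex.measurableEquivRealProd z) := fun z => rfl
  simp_rw [hcomp]
  rw [← MeasureTheory.lintegral_map hG Complex.measurableEquivRealProd.measurable,
    Complex.volume_preserving_equiv_real_prod.map_eq]
  rw [MeasureTheory.Measure.volume_eq_prod, MeasureTheory.lintegral_prod _ hG.aemeasurable]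
  simp only []
  have hpull : ∀ x : ℝ, (∫⁻ y : ℝ, ENNReal.ofReal ((c/Real.pi) *
      Real.exp ((p-1)*x^2 - (p+1)*y^2 - 2*q*(x*y) + 2*u*x - 2*v*y + g)))
      = ENNReal.ofReal (c/Real.pi) * ∫⁻ y : ℝ, ENNReal.ofReal
          (Real.exp ((p-1)*x^2 - (p+1)*y^2 - 2*q*x*y + 2*u*x - 2*v*y + g)) := by
    intro x
    rw [← lintegral_const_mul' _ _ ENNReal.ofReal_ne_top]
    congr 1 with y
    rw [← ENNReal.ofReal_mul (by positivity)]
    congr 2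
    ring
  simp_rw [hpull]
  rw [lintegral_const_mul' _ _ ENNReal.ofReal_ne_top, core_s3 p q u v g h,
    ← ENNReal.ofReal_mul (by positivity), ENNReal.toReal_ofReal (by positivity)]

lemma re_expand (α β γ z : ℂ) :
    (α*z^2 + 2*β*z + γ).re
    = α.re*(z.re^2 - z.im^2) - 2*α.im*(z.re*z.im) + 2*β.re*z.re - 2*β.im*z.im + γ.re := by
  simp [Complex.add_re, Complex.mul_re, Complex.mul_im, pow_two]
  ring

theorem kernel_norm_formula (s t : ℂ) (h : ‖t‖ < ‖s‖) (w : ℂ) :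
    Real.sqrt (∫ z, (‖Kst s t z w‖)^2 ∂gaussMeasure)
    = ((‖s‖)^2 - (‖t‖)^2) ^ (-(1/4) : ℝ) *
      Real.exp ((‖w‖)^2 / (2*((‖s‖)^2 - (‖t‖)^2))) *
      ‖Complex.exp (t * (((‖t‖)^2 + 1 - (‖s‖)^2 : ℝ) : ℂ) * w^2 /
        (2 * (starRingEnd ℂ s) * ((((‖s‖)^2 - (‖t‖)^2 : ℝ)) : ℂ)))‖ := by
  have hA : 0 < ‖s‖ := lt_of_le_of_lt (norm_nonneg t) h
  have hs : s ≠ 0 := by simpa using hA.ne'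
  have hcs : (starRingEnd ℂ s) ≠ 0 := by simpa using hs
  set A := ‖s‖ with hAdef
  set B := ‖t‖ with hBdef
  set W := ‖w‖ with hWdef
  set p := (t/s).re with hp
  set q := (t/s).im with hq
  set u := ((starRingEnd ℂ w)/s).re with hu
  set v := ((starRingEnd ℂ w)/s).im with hv
  set g := ((-(starRingEnd ℂ (t*w^2)))/s).re with hg
  set R := (t*w^2/(starRingEnd ℂ s)).re with hR
  have hr2 : 0 < A^2 - B^2 := by
    have := pow_lt_pow_left₀ h (norm_nonneg t) (by norm_num : (2:ℕ) ≠ 0)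
    linarith
  -- bridge facts
  have hF1 : p^2 + q^2 = B^2/A^2 := by
    have e : p^2+q^2 = Complex.normSq (t/s) := by rw [Complex.normSq_apply]; ring
    rw [e, ← Complex.sq_norm, norm_div, div_pow]
  have hF2 : u^2 + v^2 = W^2/A^2 := by
    have e : u^2+v^2 = Complex.normSq ((starRingEnd ℂ w)/s) := by
      rw [Complex.normSq_apply]; ring
    rw [e, ← Complex.sq_norm, norm_div, Complex.norm_conj, div_pow]
  have hF4 : g = -R := by
    rw [hg, hR, show (-(starRingEnd ℂ (t*w^2)))/s
        = -(starRingEnd ℂ (t*w^2/(starRingEnd ℂ s))) by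
      rw [map_div₀, Complex.conj_conj, neg_div],
      Complex.neg_re, Complex.conj_re]
  have hss : ((A^2 : ℝ) : ℂ) = s * starRingEnd ℂ s := by
    rw [hAdef, Complex.sq_norm, Complex.mul_conj]
  have hF3 : p*(u^2-v^2) + 2*(q*(u*v)) = R/A^2 := by
    have e1 : (starRingEnd ℂ (t/s) * ((starRingEnd ℂ w)/s)^2).re
        = p*(u^2-v^2) + 2*(q*(u*v)) := by
      simp only [Complex.mul_re, Complex.mul_im, pow_two, map_div₀, Complex.conj_re,
        Complex.conj_im, hp, hq, hu, hv]
      simp [Complex.div_re, Complex.div_im]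
      ring
    have e2 : starRingEnd ℂ (t/s) * ((starRingEnd ℂ w)/s)^2
        = starRingEnd ℂ (((A^2:ℝ):ℂ)⁻¹ * (t*w^2/(starRingEnd ℂ s))) := by
      rw [map_mul, map_div₀, map_inv₀, Complex.conj_ofReal, hss]
      rw [map_div₀, map_mul, map_pow, Complex.conj_conj]
      field_simp
      try ring
      try tauto
    rw [← e1, e2, Complex.conj_re, ← Complex.ofReal_inv, Complex.re_ofReal_mul, ← hR]
    rw [inv_mul_eq_div]
  have hlt : p^2 + q^2 < 1 := by
    rw [hF1, div_lt_one (by positivity)]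
    linarith
  -- rewrite the integrand
  have hintg : ∀ z : ℂ, (‖Kst s t z w‖)^2
      = A⁻¹ * Real.exp (p*(z.re^2-z.im^2) - 2*q*(z.re*z.im) + 2*u*z.re - 2*v*z.im + g) := by
    intro z
    rw [kst_abs_sq s t w hs z]
    congr 2
    have := re_expand (t/s) ((starRingEnd ℂ w)/s) ((-(starRingEnd ℂ (t*w^2)))/s) z
    rw [this]
  simp_rw [hintg]
  rw [gauss_int A⁻¹ p q u v g (by positivity) hlt]
  -- final algebra
  have hDval : 1 - p^2 - q^2 = (A^2-B^2)/A^2 := by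
    rw [show (1:ℝ) - p^2 - q^2 = 1 - (p^2+q^2) by ring, hF1]
    field_simp
  have hexpval : u^2*(1+p) + 2*q*u*v + v^2*(1-p) = (W^2 + R)/A^2 := by
    have e : u^2*(1+p) + 2*q*u*v + v^2*(1-p) = (u^2+v^2) + (p*(u^2-v^2) + 2*(q*(u*v))) := by
      ring
    rw [e, hF2, hF3, ← add_div]
  have hsq : Real.sqrt ((A^2-B^2)/A^2) = Real.sqrt (A^2-B^2) / A := by
    rw [Real.sqrt_div hr2.le, Real.sqrt_sq hA.le]
  have hsqr2pos : 0 < Real.sqrt (A^2-B^2) := Real.sqrt_pos.mpr hr2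
  have hpref : A⁻¹ / Real.pi * (Real.pi / Real.sqrt ((A^2-B^2)/A^2))
      = (Real.sqrt (A^2-B^2))⁻¹ := by
    rw [hsq]
    field_simp
    try exact Or.inl (mul_comm _ _)
  have hexp2 : g + (u^2*(1+p) + 2*q*u*v + v^2*(1-p))/(1-p^2-q^2)
      = W^2/(A^2-B^2) + (B^2+1-A^2)/(A^2-B^2)*R := by
    rw [hF4, hexpval, hDval]
    have hA2 : (A:ℝ)^2 ≠ 0 := by positivity
    have hr2' : (A:ℝ)^2 - B^2 ≠ 0 := hr2.ne'
    field_simp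
    ring
  have hZ : t * ((B^2+1-A^2 : ℝ):ℂ) * w^2 / (2*(starRingEnd ℂ s)*(((A^2-B^2) : ℝ):ℂ))
      = (((B^2+1-A^2)/(2*(A^2-B^2)) : ℝ):ℂ) * (t*w^2/(starRingEnd ℂ s)) := by
    have hc2 : ((A^2-B^2 : ℝ):ℂ) ≠ 0 := by exact_mod_cast hr2.ne'
    push_cast at hc2 ⊢
    field_simp [hcs, hc2]
  rw [show A⁻¹ / Real.pi * (Real.pi / Real.sqrt (1-p^2-q^2) *
        Real.exp (g + (u^2*(1+p) + 2*q*u*v + v^2*(1-p))/(1-p^2-q^2)))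
      = (A⁻¹ / Real.pi * (Real.pi / Real.sqrt (1-p^2-q^2))) *
        Real.exp (g + (u^2*(1+p) + 2*q*u*v + v^2*(1-p))/(1-p^2-q^2)) by ring,
    hexp2, hDval, hpref, hZ, Complex.norm_exp, Complex.re_ofReal_mul]
  -- now pure real computation
  have hrhs : (0:ℝ) ≤ (A^2-B^2) ^ (-(1/4) : ℝ) * Real.exp (W^2/(2*(A^2-B^2))) *
      Real.exp ((B^2+1-A^2)/(2*(A^2-B^2)) * R) := by positivity
  rw [show (Real.sqrt (A^2-B^2))⁻¹ *
      Real.exp (W^2/(A^2-B^2) + (B^2+1-A^2)/(A^2-B^2)*R)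
      = ((A^2-B^2) ^ (-(1/4) : ℝ) * Real.exp (W^2/(2*(A^2-B^2))) *
          Real.exp ((B^2+1-A^2)/(2*(A^2-B^2)) * R))^2 by
    rw [mul_pow, mul_pow, ← Real.rpow_natCast ((A^2-B^2) ^ (-(1/4) : ℝ)) 2,
      ← Real.rpow_mul hr2.le]
    norm_num
    rw [Real.rpow_neg hr2.le, ← Real.sqrt_eq_rpow, mul_assoc,
      show Real.exp (W^2/(2*(A^2-B^2)))^2 * Real.exp ((B^2+1-A^2)/(2*(A^2-B^2))*R)^2
        = Real.exp (W^2/(A^2-B^2) + (B^2+1-A^2)/(A^2-B^2)*R) by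
          rw [← Real.exp_nat_mul, ← Real.exp_nat_mul, ← Real.exp_add]
          congr 1
          push_cast
          field_simp]]
  exact Real.sqrt_sq hrhs
end

section
/- Let (s,t) ∈ ℂ² with |s| > |t|. Then for every u ∈ ℂ, the operator T^{(s,t)} applied to the reproducing kernel K_u(z) = e^{zū} gives T^{(s,t)}K_u = K_u^{(s,t)}, i.e. ∫_ℂ K^{(s,t)}(z,w) e^{wū} dλ(w) = (1/√s) exp[(tz² - conj(tu²) + 2zū)/(2s)]. -/
open MeasureTheory Complex

open scoped NNReal ENNReal

theorem real_exp_bound {α β r m u v x y : ℝ} (hsq : α^2 + β^2 = r^2) (h0 : 0 ≤ r) (hr : r < 1)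
    (hu : |u| ≤ m) (hv : |v| ≤ m) :
    -(1+α)*x^2 + u*x - 2*β*x*y + v*y + (α-1)*y^2
      ≤ m^2/(1-r) - (1-r)/2*x^2 - (1-r)/2*y^2 := by
  have hm : 0 ≤ m := le_trans (abs_nonneg u) hu
  have hk : 0 < 1 - r := by linarith
  have hux : u*x ≤ m*|x| := le_trans (le_abs_self _) (by rw [abs_mul]; exact mul_le_mul_of_nonneg_right hu (abs_nonneg x))
  have hvy : v*y ≤ m*|y| := le_trans (le_abs_self _) (by rw [abs_mul]; exact mul_le_mul_of_nonneg_right hv (abs_nonneg y))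
  have d : ∀ z : ℝ, m * z ≤ (1-r)/2 * z^2 + m^2/(2*(1-r)) := by
    intro z
    rw [← sub_nonneg]
    have h' : (1-r)/2 * z^2 + m^2/(2*(1-r)) - m*z = ((1-r)*z - m)^2/(2*(1-r)) := by
      field_simp; ring
    rw [h']; positivity
  have dx := d |x|; have dy := d |y|
  rw [_root_.sq_abs] at dx; rw [_root_.sq_abs] at dy
  have hQ : 0 ≤ (α+r)*x^2 + 2*β*x*y + (r-α)*y^2 := by
    rcases eq_or_lt_of_le h0 with h|h
    · have hα : α = 0 := by nlinarith [sq_nonneg α, sq_nonneg β]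
      have hβ : β = 0 := by nlinarith [sq_nonneg α, sq_nonneg β]
      simp [hα, hβ, ← h]
    · have q1 := sq_nonneg ((r+α)*x + β*y)
      have q2 := sq_nonneg ((r-α)*y + β*x)
      nlinarith [mul_pos h h]
  have hkk : m^2/(2*(1-r)) + m^2/(2*(1-r)) = m^2/(1-r) := by field_simp; ring
  linarith [dx, dy, hux, hvy]

theorem integrable_aux {a : ℂ} (ha : ‖a‖ < 1) (b c : ℂ) :
    Integrable (fun p : ℝ × ℝ => cexp ((a-1)*(p.2:ℂ)^2 + (c*I - b*I + 2*a*I*p.1)*(p.2:ℂ)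
        + (-(1+a)*(p.1:ℂ)^2 + (c+b)*(p.1:ℂ)))) (volume.prod volume) := by
  set r := ‖a‖ with hr
  set m := ‖b+c‖ + ‖b-c‖ with hm
  have hk : 0 < (1-r)/2 := by have := norm_nonneg a; simp only [hr] at *; linarith
  apply Integrable.mono'
    (g := fun p : ℝ × ℝ => Real.exp (m^2/(1-r)) *
      (Real.exp (-((1-r)/2) * p.1^2) * Real.exp (-((1-r)/2) * p.2^2)))
  · exact ((integrable_exp_neg_mul_sq hk).mul_prod (integrable_exp_neg_mul_sq hk)).const_mul _
  · apply Continuous.aestronglyMeasurable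
    apply Complex.continuous_exp.comp
    fun_prop
  · apply Filter.Eventually.of_forall
    intro p
    rw [Complex.norm_exp, ← Real.exp_add, ← Real.exp_add]
    apply Real.exp_le_exp.mpr
    have hres : ((a-1)*(p.2:ℂ)^2 + (c*I - b*I + 2*a*I*p.1)*(p.2:ℂ)
        + (-(1+a)*(p.1:ℂ)^2 + (c+b)*(p.1:ℂ))).re
        = -(1+a.re)*p.1^2 + (b+c).re*p.1 - 2*a.im*p.1*p.2 + (b-c).im*p.2 + (a.re-1)*p.2^2 := by
      simp [Complex.add_re, Complex.sub_re, Complex.mul_re, Complex.mul_im, Complex.add_im,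
        Complex.sub_im, Complex.I_re, Complex.I_im, Complex.ofReal_re, Complex.ofReal_im,
        Complex.one_re, Complex.one_im, Complex.neg_re, Complex.neg_im, pow_two]
      ring
    rw [hres]
    have hsq : a.re^2 + a.im^2 = r^2 := by
      rw [hr, Complex.sq_norm, Complex.normSq_apply]; ring
    have hu : |(b+c).re| ≤ m := by
      have := Complex.abs_re_le_norm (b+c); have := norm_nonneg (b-c); rw [hm]; linarith
    have hv : |(b-c).im| ≤ m := by
      have := Complex.abs_im_le_norm (b-c); have := norm_nonneg (b+c); rw [hm]; linarith
    have := real_exp_bound hsq (norm_nonneg a) ha hu hv (x := p.1) (y := p.2)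
    linarith

theorem sqrt_prefactor {w : ℂ} (hw : 0 < w.re) :
    ((Real.pi : ℂ)/w)^((1:ℂ)/2) * ((Real.pi : ℂ)*w)^((1:ℂ)/2) = (Real.pi : ℂ) := by
  have hw0 : w ≠ 0 := fun h => by simp [h] at hw
  have hpi : (0:ℝ) < Real.pi := Real.pi_pos
  have hpi0 : (Real.pi : ℂ) ≠ 0 := by exact_mod_cast hpi.ne'
  have harg : w.arg ≠ Real.pi := by
    intro h
    rw [Complex.arg_eq_pi_iff] at h
    linarith [h.1]
  have h1 : ((Real.pi : ℂ)/w) ≠ 0 := div_ne_zero hpi0 hw0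
  have h2 : ((Real.pi : ℂ)*w) ≠ 0 := mul_ne_zero hpi0 hw0
  rw [Complex.cpow_def_of_ne_zero h1, Complex.cpow_def_of_ne_zero h2, ← Complex.exp_add]
  have l1 : Complex.log ((Real.pi : ℂ)/w) = Real.log Real.pi - Complex.log w := by
    rw [div_eq_mul_inv, Complex.log_ofReal_mul hpi (inv_ne_zero hw0), Complex.log_inv w harg]
    ring
  have l2 : Complex.log ((Real.pi : ℂ)*w) = Real.log Real.pi + Complex.log w :=
    Complex.log_ofReal_mul hpi hw0
  rw [l1, l2]
  have : (↑(Real.log Real.pi) - Complex.log w) * (1/2) + (↑(Real.log Real.pi) + Complex.log w) * (1/2) = ↑(Real.log Real.pi) := by ring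
  rw [this, ← Complex.ofReal_exp, Real.exp_log hpi]

theorem key_integral {a : ℂ} (ha : ‖a‖ < 1) (b c : ℂ) :
    ∫ w, Complex.exp (c*w - a*(starRingEnd ℂ w)^2 + b*(starRingEnd ℂ w)) ∂gaussMeasure
      = Complex.exp (b*c - a*c^2) := by
  have habs := Complex.abs_re_le_norm a
  have hrecases := abs_le.mp habs
  have hB1re : (a-1).re < 0 := by
    simp only [Complex.sub_re, Complex.one_re]; linarith [hrecases.2]
  have ha1 : a - 1 ≠ 0 := by
    intro h; rw [h] at hB1re; simp at hB1re
  have hB2re : ((a-1)⁻¹).re < 0 := by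
    rw [Complex.inv_re]
    exact div_neg_of_neg_of_pos hB1re (Complex.normSq_pos.mpr ha1)
  have hw : 0 < (1-a).re := by
    simp only [Complex.sub_re, Complex.one_re]; linarith [hrecases.2]
  have hmeas : Measurable fun z : ℂ => Real.toNNReal (Real.exp (-(‖z‖)^2) / Real.pi) := by
    apply Measurable.real_toNNReal
    exact (((Real.continuous_exp.comp (by continuity))).div_const _).measurable
  have hgm : gaussMeasure = volume.withDensity
      (fun z => ((Real.toNNReal (Real.exp (-(‖z‖)^2) / Real.pi) : ℝ≥0) : ℝ≥0∞)) := rfl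
  rw [hgm, integral_withDensity_eq_integral_smul hmeas]
  rw [← (Complex.volume_preserving_equiv_real_prod.symm _).integral_comp
    measurableEquivRealProd.symm.measurableEmbedding]
  simp_rw [Complex.measurableEquivRealProd_symm_apply, Complex.mk_eq_add_mul_I]
  have hpt : ∀ x y : ℝ,
      (Real.toNNReal (Real.exp (-(‖(↑x + ↑y*I)‖)^2) / Real.pi))
        • Complex.exp (c*(↑x + ↑y*I) - a*(starRingEnd ℂ (↑x + ↑y*I))^2 + b*(starRingEnd ℂ (↑x + ↑y*I)))
      = (Real.pi : ℂ)⁻¹ * Complex.exp ((a-1)*(y:ℂ)^2 + (c*I - b*I + 2*a*I*x)*(y:ℂ)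
          + (-(1+a)*(x:ℂ)^2 + (c+b)*(x:ℂ))) := by
    intro x y
    have hpos : (0:ℝ) ≤ Real.exp (-(‖(↑x + ↑y*I)‖)^2) / Real.pi := by positivity
    rw [NNReal.smul_def, Real.coe_toNNReal _ hpos, Complex.real_smul]
    rw [Complex.ofReal_div, Complex.ofReal_exp]
    have habs2 : (‖(↑x + ↑y*I)‖)^2 = x^2 + y^2 := by
      rw [Complex.sq_norm, Complex.normSq_add_mul_I]
    rw [habs2]
    rw [div_mul_eq_mul_div, div_eq_inv_mul, mul_assoc, ← Complex.exp_add]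
    congr 2
    simp only [map_add, map_mul, Complex.conj_ofReal, Complex.conj_I]
    push_cast
    linear_combination (-a*(y:ℂ)^2) * Complex.I_sq
  simp_rw [hpt]
  rw [Measure.volume_eq_prod, integral_prod _ ((integrable_aux ha b c).const_mul _)]
  simp_rw [integral_const_mul, integral_cexp_quadratic hB1re]
  have hexp1 : ∀ x : ℝ,
      (-(1+a)*(x:ℂ)^2 + (c+b)*(x:ℂ)) - (c*I - b*I + 2*a*I*(x:ℂ))^2/(4*(a-1))
      = (a-1)⁻¹*(x:ℂ)^2 + ((2*a*c - b - c)*(a-1)⁻¹)*(x:ℂ) + (c-b)^2/(4*(a-1)) := by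
    intro x
    have hI : (c*I - b*I + 2*a*I*(x:ℂ))^2 = -((c - b + 2*a*(x:ℂ))^2) := by
      linear_combination ((c-b+2*a*(x:ℂ))^2) * Complex.I_sq
    rw [hI]
    field_simp
    ring
  simp_rw [hexp1]
  rw [integral_const_mul, integral_cexp_quadratic hB2re]
  have hexp2 : (c-b)^2/(4*(a-1)) - ((2*a*c - b - c)*(a-1)⁻¹)^2/(4*(a-1)⁻¹) = b*c - a*c^2 := by
    field_simp
    ring
  rw [hexp2]
  have hassoc : ∀ E : ℂ, (↑Real.pi)⁻¹ * ((↑Real.pi / -(a-1))^((1:ℂ)/2) *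
      ((↑Real.pi / -(a-1)⁻¹)^((1:ℂ)/2) * E))
      = ((↑Real.pi)⁻¹ * (↑Real.pi / -(a-1))^((1:ℂ)/2) * (↑Real.pi / -(a-1)⁻¹)^((1:ℂ)/2)) * E :=
    fun E => by ring
  have hpre : (Real.pi : ℂ)⁻¹ * (↑Real.pi / -(a-1))^((1:ℂ)/2) * (↑Real.pi / -(a-1)⁻¹)^((1:ℂ)/2) = 1 := by
    have e1 : -(a-1) = 1 - a := by ring
    have e2 : (Real.pi : ℂ) / -(a-1)⁻¹ = ↑Real.pi * (1-a) := by
      rw [← inv_neg, e1, div_inv_eq_mul]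
    rw [mul_assoc, e1, e2, sqrt_prefactor hw]
    exact inv_mul_cancel₀ (by exact_mod_cast Real.pi_pos.ne')
  rw [hassoc, hpre, one_mul]

theorem T_on_reproducing_kernel (s t : ℂ) (h : ‖t‖ < ‖s‖) (u z : ℂ) :
    ∫ w, Kst s t z w * Complex.exp (w * starRingEnd ℂ u) ∂gaussMeasure
      = (csqrt s)⁻¹ *
        Complex.exp ((t*z^2 - starRingEnd ℂ (t*u^2) + 2*z*(starRingEnd ℂ u)) / (2*s)) := by
  have hs0 : (0:ℝ) < ‖s‖ := lt_of_le_of_lt (norm_nonneg t) h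
  have hs : s ≠ 0 := by
    intro h0; rw [h0] at hs0; simp at hs0
  set a := starRingEnd ℂ t / (2*s) with hadef
  have ha : ‖a‖ < 1 := by
    rw [hadef, norm_div, norm_mul]
    simp only [Complex.norm_conj, Complex.norm_two]
    rw [div_lt_one (by positivity)]
    linarith
  have hpt : ∀ w : ℂ, Kst s t z w * Complex.exp (w * starRingEnd ℂ u)
      = ((csqrt s)⁻¹ * Complex.exp (t*z^2/(2*s))) *
        Complex.exp ((starRingEnd ℂ u)*w - a*(starRingEnd ℂ w)^2 + (z/s)*(starRingEnd ℂ w)) := by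
    intro w
    simp only [Kst, mul_assoc, ← Complex.exp_add]
    congr 2
    rw [hadef]
    simp only [map_mul, map_pow]
    field_simp
    ring
  simp_rw [hpt]
  rw [integral_const_mul, key_integral ha (z/s) (starRingEnd ℂ u)]
  rw [mul_assoc, ← Complex.exp_add]
  congr 2
  rw [hadef]
  simp only [map_mul, map_pow]
  field_simp
  ring
end

section
/- Let (s,t) ∈ ℂ² with |s|² - |t|² > 1. Then ∫_ℂ ∫_ℂ |K^{(s,t)}(z,w)|² dλ(z) dλ(w) = |s| / (|s|² - |t|² - 1). Consequently T^{(s,t)} is a Hilbert–Schmidt operator on L²(ℂ, dλ) with Hilbert–Schmidt norm √|s| / √(|s|² - |t|² - 1). -/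
open MeasureTheory Complex

open Real

lemma gauss1_integrable (p q : ℝ) (hp : 0 < p) :
    Integrable (fun x : ℝ => Real.exp (-p * x^2 + q * x)) := by
  have hpt : ∀ x : ℝ, -p * x^2 + q * x = -p * (x - q/(2*p))^2 + q^2/(4*p) := by
    intro x; field_simp; ring
  simp only [hpt]
  simp only [Real.exp_add]
  exact ((integrable_exp_neg_mul_sq hp).comp_sub_right (q/(2*p))).mul_const _

lemma gauss1 (p q : ℝ) (hp : 0 < p) :
    ∫ x : ℝ, Real.exp (-p * x^2 + q * x)
      = Real.sqrt (π/p) * Real.exp (q^2/(4*p)) := by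
  have hpt : ∀ x : ℝ, -p * x^2 + q * x = -p * (x - q/(2*p))^2 + q^2/(4*p) := by
    intro x; field_simp; ring
  simp only [hpt, Real.exp_add]
  rw [integral_mul_const, integral_sub_right_eq_self (fun x => Real.exp (-p * x^2)) (q/(2*p)),
    integral_gaussian]

set_option maxHeartbeats 1000000 in
lemma gauss2_integrable (A B C D E : ℝ) (hA : 0 < A) (hB : 0 < B) (hd : C^2 < 4*A*B) :
    Integrable (fun z : ℝ × ℝ =>
      Real.exp (-(A*z.1^2 + B*z.2^2 + C*z.1*z.2) + D*z.1 + E*z.2)) (volume.prod volume) := by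
  have h4 : 0 < 4*A*B - C^2 := by linarith
  obtain ⟨ε, hε⟩ : ∃ ε : ℝ, ε = (4*A*B - C^2)/(4*(A+B)) := ⟨_, rfl⟩
  have hAB : (0:ℝ) < 4*(A+B) := by linarith
  have hε0 : 0 < ε := hε ▸ div_pos h4 hAB
  have hεdef : ε * (4*(A+B)) = 4*A*B - C^2 := by
    rw [hε, div_mul_cancel₀ _ (ne_of_gt hAB)]
  have hAε : 0 < A - ε := by nlinarith
  have key : ∀ x y : ℝ, (A-ε)*x^2 + (B-ε)*y^2 + C*x*y ≥ 0 := by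
    intro x y
    nlinarith [sq_nonneg (2*(A-ε)*x + C*y), sq_nonneg (ε*y), sq_nonneg y, hAε.le]
  have hbound : ∀ z : ℝ × ℝ,
      ‖Real.exp (-(A*z.1^2 + B*z.2^2 + C*z.1*z.2) + D*z.1 + E*z.2)‖
        ≤ Real.exp (-ε * z.1^2 + D*z.1) * Real.exp (-ε * z.2^2 + E*z.2) := by
    intro z
    rw [Real.norm_eq_abs, abs_of_pos (Real.exp_pos _), ← Real.exp_add]
    apply Real.exp_le_exp.2
    nlinarith [key z.1 z.2]
  have hint : Integrable (fun z : ℝ × ℝ =>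
      Real.exp (-ε * z.1^2 + D*z.1) * Real.exp (-ε * z.2^2 + E*z.2)) (volume.prod volume) :=
    (gauss1_integrable ε D hε0).mul_prod (gauss1_integrable ε E hε0)
  refine Integrable.mono' hint ?_ (Filter.Eventually.of_forall hbound)
  apply Continuous.aestronglyMeasurable
  continuity

lemma gauss2 (A B C D E : ℝ) (hA : 0 < A) (hB : 0 < B) (hd : C^2 < 4*A*B) :
    ∫ z : ℝ × ℝ, Real.exp (-(A*z.1^2 + B*z.2^2 + C*z.1*z.2) + D*z.1 + E*z.2) ∂(volume.prod volume)
      = (2*π / Real.sqrt (4*A*B - C^2)) * Real.exp ((B*D^2 + A*E^2 - C*D*E)/(4*A*B - C^2)) := by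
  have h4 : 0 < 4*A*B - C^2 := by linarith
  have hB' : (B:ℝ) ≠ 0 := ne_of_gt hB
  have h4' : 4*A*B - C^2 ≠ 0 := ne_of_gt h4
  rw [integral_prod _ (gauss2_integrable A B C D E hA hB hd)]
  have hp2 : 0 < A - C^2/(4*B) := by
    rw [sub_pos, div_lt_iff₀ (by positivity)]
    nlinarith
  have hp2' : A - C^2/(4*B) ≠ 0 := ne_of_gt hp2
  have inner : ∀ x : ℝ, (∫ y : ℝ, Real.exp (-(A*x^2 + B*y^2 + C*x*y) + D*x + E*y))
      = Real.sqrt (π/B) *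
          (Real.exp (-(A - C^2/(4*B))*x^2 + (D - C*E/(2*B))*x) * Real.exp (E^2/(4*B))) := by
    intro x
    have e1 : (fun y : ℝ => Real.exp (-(A*x^2 + B*y^2 + C*x*y) + D*x + E*y))
        = fun y : ℝ => Real.exp (-B*y^2 + (E - C*x)*y) * Real.exp (-A*x^2 + D*x) := by
      funext y; rw [← Real.exp_add]; congr 1; ring
    rw [e1, integral_mul_const, gauss1 B (E - C*x) hB, mul_assoc, ← Real.exp_add]
    rw [← Real.exp_add]
    congr 2
    field_simp
    ring
  simp only [inner]
  rw [integral_const_mul, integral_mul_const, gauss1 _ _ hp2]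
  rw [show Real.sqrt (π/B) * (Real.sqrt (π/(A - C^2/(4*B))) *
      Real.exp ((D - C*E/(2*B))^2/(4*(A - C^2/(4*B)))) * Real.exp (E^2/(4*B)))
      = (Real.sqrt (π/B) * Real.sqrt (π/(A - C^2/(4*B)))) *
        (Real.exp ((D - C*E/(2*B))^2/(4*(A - C^2/(4*B)))) * Real.exp (E^2/(4*B))) by ring]
  have hsq : Real.sqrt (π/B) * Real.sqrt (π/(A - C^2/(4*B))) = 2*π / Real.sqrt (4*A*B - C^2) := by
    rw [← Real.sqrt_mul (by positivity), div_mul_div_comm,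
      show B*(A - C^2/(4*B)) = (4*A*B - C^2)/4 by field_simp, div_div_eq_mul_div,
      show π*π*4 = (2*π)^2 by ring,
      Real.sqrt_div (by positivity), Real.sqrt_sq (by positivity)]
  rw [hsq, ← Real.exp_add]
  congr 2
  rw [show 4*(A - C^2/(4*B)) = (4*A*B - C^2)/B by field_simp, div_div_eq_mul_div]
  rw [div_add_div _ _ h4' (by positivity), div_eq_div_iff (mul_ne_zero h4' (by positivity)) h4']
  field_simp
  ring

lemma complex_gauss (A B C D E : ℝ) (hA : 0 < A) (hB : 0 < B) (hd : C^2 < 4*A*B) :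
    ∫ z : ℂ, Real.exp (-(A*z.re^2 + B*z.im^2 + C*z.re*z.im) + D*z.re + E*z.im)
      = (2*π / Real.sqrt (4*A*B - C^2)) * Real.exp ((B*D^2 + A*E^2 - C*D*E)/(4*A*B - C^2)) := by
  have := (Complex.volume_preserving_equiv_real_prod).integral_comp'
    (f := Complex.measurableEquivRealProd)
    (fun p : ℝ × ℝ => Real.exp (-(A*p.1^2 + B*p.2^2 + C*p.1*p.2) + D*p.1 + E*p.2))
  simp only [Complex.measurableEquivRealProd_apply] at this
  rw [this, Measure.volume_eq_prod, gauss2 A B C D E hA hB hd]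

lemma integral_gaussMeasure (g : ℂ → ℝ) :
    ∫ z, g z ∂gaussMeasure = ∫ z, (Real.exp (-(‖z‖)^2) / π) * g z := by
  have hc : Continuous fun z : ℂ => Real.exp (-(‖z‖)^2) / π := by
    have := continuous_norm (E := ℂ)
    continuity
  have meas : Measurable (fun z : ℂ => (Real.exp (-(‖z‖)^2) / π).toNNReal) :=
    (continuous_real_toNNReal.comp hc).measurable
  rw [gaussMeasure]
  have h1 : (fun z : ℂ => ENNReal.ofReal (Real.exp (-(‖z‖)^2) / π))
      = fun z => ((fun z : ℂ => (Real.exp (-(‖z‖)^2) / π).toNNReal) z : ENNReal) := rfl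
  rw [h1, integral_withDensity_eq_integral_smul meas g]
  congr 1; funext z
  rw [NNReal.smul_def, Real.coe_toNNReal _ (by positivity), smul_eq_mul]

lemma Kst_sq (s t z w : ℂ) (hs : s ≠ 0) :
    (‖Kst s t z w‖)^2
      = (‖s‖)⁻¹ *
        Real.exp (2 * (((t*z^2 - starRingEnd ℂ (t*w^2) + 2*z*(starRingEnd ℂ w)) / (2*s)).re)) := by
  rw [Kst, norm_mul, norm_inv, mul_pow, inv_pow, Complex.norm_exp]
  have habs : ‖csqrt s‖ = ‖s‖ ^ ((1:ℝ)/2) := by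
    rw [csqrt, Complex.norm_cpow_of_ne_zero hs]
    norm_num
  have h2 : (‖s‖ ^ ((1:ℝ)/2))^2 = ‖s‖ := by
    rw [← Real.rpow_natCast (‖s‖ ^ ((1:ℝ)/2)) 2,
      ← Real.rpow_mul (norm_nonneg _)]
    norm_num
  rw [habs, h2, sq, ← Real.exp_add, ← two_mul]

set_option maxHeartbeats 2000000 in
lemma exponent_id (s t w : ℂ) (hs : s ≠ 0) (z : ℂ) :
    2 * (((t*z^2 - starRingEnd ℂ (t*w^2) + 2*z*(starRingEnd ℂ w)) / (2*s)).re)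
        - (‖z‖)^2
    = (-((starRingEnd ℂ (t*w^2))/s).re)
      + (-( (1-(t/s).re)*z.re^2 + (1+(t/s).re)*z.im^2 + (2*(t/s).im)*z.re*z.im)
         + (2*((starRingEnd ℂ w)/s).re)*z.re + (-2*((starRingEnd ℂ w)/s).im)*z.im) := by
  have hns : Complex.normSq s ≠ 0 := by simp [Complex.normSq_eq_zero, hs]
  have hns' : s.re^2 + s.im^2 ≠ 0 := by
    simpa [Complex.normSq_apply, pow_two] using hns
  have h2ns : 2*(s.re^2 + s.im^2) ≠ 0 := by
    simpa using hns'
  have h2ns' : 2*(s.re*s.re + s.im*s.im) ≠ 0 := by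
    simpa [pow_two] using h2ns
  have hn2s : Complex.normSq (2*s) ≠ 0 := by simp [Complex.normSq_eq_zero, hs]
  have hdiv : ∀ ζ : ℂ, (ζ/(2*s)).re = (ζ.re*s.re + ζ.im*s.im)/(2*(s.re^2+s.im^2)) := by
    intro ζ
    rw [Complex.div_re, ← add_div, div_eq_div_iff hn2s (by simpa [pow_two] using h2ns)]
    simp only [Complex.normSq_apply, Complex.mul_re, Complex.mul_im, Complex.re_ofNat,
      Complex.im_ofNat]
    ring
  rw [Complex.sq_norm, hdiv]
  simp only [Complex.div_re, Complex.div_im, Complex.mul_re,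
    Complex.mul_im, Complex.sub_re, Complex.sub_im, Complex.add_re, Complex.add_im,
    Complex.conj_re, Complex.conj_im, Complex.re_ofNat, Complex.im_ofNat, pow_two]
  field_simp [hns, h2ns']
  simp only [Complex.normSq_apply]
  ring
set_option maxHeartbeats 4000000 in
theorem kernel_HilbertSchmidt (s t : ℂ)
    (h : 1 < (‖s‖)^2 - (‖t‖)^2) :
    (∫ w, ∫ z, (‖Kst s t z w‖)^2 ∂gaussMeasure ∂gaussMeasure)
      = ‖s‖ / ((‖s‖)^2 - (‖t‖)^2 - 1) ∧
    Real.sqrt (∫ w, ∫ z, (‖Kst s t z w‖)^2 ∂gaussMeasure ∂gaussMeasure)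
      = Real.sqrt (‖s‖) / Real.sqrt ((‖s‖)^2 - (‖t‖)^2 - 1) := by
  have habs_t : (0:ℝ) ≤ (‖t‖)^2 := sq_nonneg _
  have habs_s : 1 < (‖s‖)^2 := by nlinarith
  have hS0 : 0 < ‖s‖ := by nlinarith [norm_nonneg s]
  have hs : s ≠ 0 := by
    intro hc; rw [hc] at habs_s; simp at habs_s; nlinarith
  have hS2 : (0:ℝ) < (‖s‖)^2 := by positivity
  have hk0 : (0:ℝ) < (‖s‖)^2 - (‖t‖)^2 := by linarith
  -- p, q
  have hpq : (t/s).re^2 + (t/s).im^2 = (‖t‖)^2/(‖s‖)^2 := by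
    have h1 : (t/s).re^2 + (t/s).im^2 = (‖t/s‖)^2 := by
      rw [Complex.sq_norm, Complex.normSq_apply]; ring
    rw [h1, norm_div, div_pow]
  have hpq1 : (t/s).re^2 + (t/s).im^2 < 1 := by
    rw [hpq, div_lt_one hS2]; linarith
  have hA : 0 < 1 - (t/s).re := by nlinarith [sq_nonneg (t/s).im]
  have hB : 0 < 1 + (t/s).re := by nlinarith [sq_nonneg (t/s).im]
  have hd : (2*(t/s).im)^2 < 4*(1 - (t/s).re)*(1 + (t/s).re) := by nlinarith
  -- inner integral
  have inner : ∀ w : ℂ, (∫ z, (‖Kst s t z w‖)^2 ∂gaussMeasure)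
      = (‖s‖)⁻¹ * (1/π) * Real.exp (-((starRingEnd ℂ (t*w^2))/s).re) *
        ((2*π / Real.sqrt (4*(1 - (t/s).re)*(1 + (t/s).re) - (2*(t/s).im)^2)) *
         Real.exp (((1 + (t/s).re)*(2*((starRingEnd ℂ w)/s).re)^2
            + (1 - (t/s).re)*(-2*((starRingEnd ℂ w)/s).im)^2
            - (2*(t/s).im)*(2*((starRingEnd ℂ w)/s).re)*(-2*((starRingEnd ℂ w)/s).im))
           / (4*(1 - (t/s).re)*(1 + (t/s).re) - (2*(t/s).im)^2))) := by
    intro w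
    rw [integral_gaussMeasure]
    have key : ∀ z : ℂ, (Real.exp (-(‖z‖)^2) / π) * (‖Kst s t z w‖)^2
        = ((‖s‖)⁻¹ * (1/π) * Real.exp (-((starRingEnd ℂ (t*w^2))/s).re)) *
          Real.exp (-( (1-(t/s).re)*z.re^2 + (1+(t/s).re)*z.im^2 + (2*(t/s).im)*z.re*z.im)
            + (2*((starRingEnd ℂ w)/s).re)*z.re + (-2*((starRingEnd ℂ w)/s).im)*z.im) := by
      intro z
      have e := exponent_id s t w hs z
      calc (Real.exp (-(‖z‖)^2) / π) * (‖Kst s t z w‖)^2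
          = (‖s‖)⁻¹ * (1/π) *
            Real.exp (2 * (((t*z^2 - starRingEnd ℂ (t*w^2) + 2*z*(starRingEnd ℂ w)) / (2*s)).re)
              - (‖z‖)^2) := by
            rw [Kst_sq s t z w hs, Real.exp_sub, Real.exp_neg]; ring
        _ = _ := by rw [e, Real.exp_add]; ring
    simp only [key]
    rw [MeasureTheory.integral_const_mul,
      complex_gauss (1 - (t/s).re) (1 + (t/s).re) (2*(t/s).im)
        (2*((starRingEnd ℂ w)/s).re) (-2*((starRingEnd ℂ w)/s).im) hA hB hd]
  -- outer coefficients
  have hγ : (t/(starRingEnd ℂ s)).re^2 + (t/(starRingEnd ℂ s)).im^2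
      = (‖t‖)^2/(‖s‖)^2 := by
    have h1 : (t/(starRingEnd ℂ s)).re^2 + (t/(starRingEnd ℂ s)).im^2
        = (‖t/(starRingEnd ℂ s)‖)^2 := by
      rw [Complex.sq_norm, Complex.normSq_apply]; ring
    rw [h1, norm_div, Complex.norm_conj, div_pow]
  have hγ1 : (t/(starRingEnd ℂ s)).re^2 + (t/(starRingEnd ℂ s)).im^2 < 1 := by
    rw [hγ, div_lt_one hS2]; linarith
  have hm : 0 < 1 - ((‖s‖)^2 - (‖t‖)^2)⁻¹ := by
    rw [sub_pos]
    exact inv_lt_one_of_one_lt₀ (by linarith)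
  have hA' : 0 < (1 - ((‖s‖)^2 - (‖t‖)^2)⁻¹)
      * (1 + (t/(starRingEnd ℂ s)).re) := by
    have : 0 < 1 + (t/(starRingEnd ℂ s)).re := by
      nlinarith [sq_nonneg (t/(starRingEnd ℂ s)).im]
    positivity
  have hB' : 0 < (1 - ((‖s‖)^2 - (‖t‖)^2)⁻¹)
      * (1 - (t/(starRingEnd ℂ s)).re) := by
    have : 0 < 1 - (t/(starRingEnd ℂ s)).re := by
      nlinarith [sq_nonneg (t/(starRingEnd ℂ s)).im]
    positivity
  have hd' : (-2*(1 - ((‖s‖)^2 - (‖t‖)^2)⁻¹)*(t/(starRingEnd ℂ s)).im)^2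
      < 4*((1 - ((‖s‖)^2 - (‖t‖)^2)⁻¹)*(1 + (t/(starRingEnd ℂ s)).re))
        *((1 - ((‖s‖)^2 - (‖t‖)^2)⁻¹)*(1 - (t/(starRingEnd ℂ s)).re)) := by
    have hγpos : 0 < 1 - ((t/(starRingEnd ℂ s)).re^2 + (t/(starRingEnd ℂ s)).im^2) := by
      linarith
    nlinarith [mul_pos (mul_pos hm hm) hγpos]
  -- component nonzero facts
  have hns2 : s.re*s.re + s.im*s.im ≠ 0 := by
    have := hS2; rw [Complex.sq_norm, Complex.normSq_apply] at this; exact ne_of_gt this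
  have hk2 : s.re*s.re + s.im*s.im - (t.re*t.re + t.im*t.im) ≠ 0 := by
    have := hk0
    rw [Complex.sq_norm, Complex.sq_norm, Complex.normSq_apply, Complex.normSq_apply] at this
    exact ne_of_gt this
  have hX : 4*(1 - (t/s).re)*(1 + (t/s).re) - (2*(t/s).im)^2
      = 4*(((‖s‖)^2 - (‖t‖)^2)/(‖s‖)^2) := by
    rw [show 4*(1 - (t/s).re)*(1 + (t/s).re) - (2*(t/s).im)^2
        = 4*(1 - ((t/s).re^2 + (t/s).im^2)) by ring, hpq]
    field_simp
  -- the outer pointwise identity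
  have outer_key : ∀ w : ℂ,
      Real.exp (-(‖w‖)^2) / π *
      ((‖s‖)⁻¹ * (1/π) * Real.exp (-((starRingEnd ℂ (t*w^2))/s).re) *
        ((2*π / Real.sqrt (4*(1 - (t/s).re)*(1 + (t/s).re) - (2*(t/s).im)^2)) *
         Real.exp (((1 + (t/s).re)*(2*((starRingEnd ℂ w)/s).re)^2
            + (1 - (t/s).re)*(-2*((starRingEnd ℂ w)/s).im)^2
            - (2*(t/s).im)*(2*((starRingEnd ℂ w)/s).re)*(-2*((starRingEnd ℂ w)/s).im))
           / (4*(1 - (t/s).re)*(1 + (t/s).re) - (2*(t/s).im)^2))))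
      = ((‖s‖)⁻¹ * (1/π) * (1/π) *
          (2*π / Real.sqrt (4*(1 - (t/s).re)*(1 + (t/s).re) - (2*(t/s).im)^2))) *
        Real.exp (-(((1 - ((‖s‖)^2 - (‖t‖)^2)⁻¹)*(1 + (t/(starRingEnd ℂ s)).re))*w.re^2
            + ((1 - ((‖s‖)^2 - (‖t‖)^2)⁻¹)*(1 - (t/(starRingEnd ℂ s)).re))*w.im^2
            + (-2*(1 - ((‖s‖)^2 - (‖t‖)^2)⁻¹)*(t/(starRingEnd ℂ s)).im)*w.re*w.im)
          + 0*w.re + 0*w.im) := by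
    intro w
    have big : (-((starRingEnd ℂ (t*w^2))/s).re)
        + (((1 + (t/s).re)*(2*((starRingEnd ℂ w)/s).re)^2
            + (1 - (t/s).re)*(-2*((starRingEnd ℂ w)/s).im)^2
            - (2*(t/s).im)*(2*((starRingEnd ℂ w)/s).re)*(-2*((starRingEnd ℂ w)/s).im))
           / (4*(1 - (t/s).re)*(1 + (t/s).re) - (2*(t/s).im)^2))
        - (‖w‖)^2
        = -(((1 - ((‖s‖)^2 - (‖t‖)^2)⁻¹)*(1 + (t/(starRingEnd ℂ s)).re))*w.re^2
            + ((1 - ((‖s‖)^2 - (‖t‖)^2)⁻¹)*(1 - (t/(starRingEnd ℂ s)).re))*w.im^2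
            + (-2*(1 - ((‖s‖)^2 - (‖t‖)^2)⁻¹)*(t/(starRingEnd ℂ s)).im)*w.re*w.im)
          + 0*w.re + 0*w.im := by
      rw [hX]
      rw [Complex.sq_norm w, Complex.sq_norm s, Complex.sq_norm t]
      simp only [Complex.normSq_apply, Complex.div_re, Complex.div_im, Complex.mul_re,
        Complex.mul_im, Complex.add_re, Complex.add_im, Complex.sub_re, Complex.sub_im,
        Complex.conj_re, Complex.conj_im, pow_two]
      field_simp [hns2, hk2, show s.re^2 + s.im^2 ≠ 0 by convert hns2 using 1; ring,
        show s.re^2 + s.im^2 - t.re^2 - t.im^2 ≠ 0 by convert hk2 using 1; ring]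
      ring
    calc Real.exp (-(‖w‖)^2) / π *
      ((‖s‖)⁻¹ * (1/π) * Real.exp (-((starRingEnd ℂ (t*w^2))/s).re) *
        ((2*π / Real.sqrt (4*(1 - (t/s).re)*(1 + (t/s).re) - (2*(t/s).im)^2)) *
         Real.exp (((1 + (t/s).re)*(2*((starRingEnd ℂ w)/s).re)^2
            + (1 - (t/s).re)*(-2*((starRingEnd ℂ w)/s).im)^2
            - (2*(t/s).im)*(2*((starRingEnd ℂ w)/s).re)*(-2*((starRingEnd ℂ w)/s).im))
           / (4*(1 - (t/s).re)*(1 + (t/s).re) - (2*(t/s).im)^2))))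
        = ((‖s‖)⁻¹ * (1/π) * (1/π) *
            (2*π / Real.sqrt (4*(1 - (t/s).re)*(1 + (t/s).re) - (2*(t/s).im)^2))) *
          Real.exp ((-((starRingEnd ℂ (t*w^2))/s).re)
            + (((1 + (t/s).re)*(2*((starRingEnd ℂ w)/s).re)^2
              + (1 - (t/s).re)*(-2*((starRingEnd ℂ w)/s).im)^2
              - (2*(t/s).im)*(2*((starRingEnd ℂ w)/s).re)*(-2*((starRingEnd ℂ w)/s).im))
             / (4*(1 - (t/s).re)*(1 + (t/s).re) - (2*(t/s).im)^2))
            - (‖w‖)^2) := by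
          rw [Real.exp_sub, Real.exp_add, Real.exp_neg]; ring
      _ = _ := by rw [big]
  have main : (∫ w, ∫ z, (‖Kst s t z w‖)^2 ∂gaussMeasure ∂gaussMeasure)
      = ‖s‖ / ((‖s‖)^2 - (‖t‖)^2 - 1) := by
    simp only [inner]
    rw [integral_gaussMeasure]
    simp only [outer_key]
    rw [MeasureTheory.integral_const_mul,
      complex_gauss _ _ _ 0 0 hA' hB' hd']
    have hX'eq : 4*((1 - ((‖s‖)^2 - (‖t‖)^2)⁻¹)*(1 + (t/(starRingEnd ℂ s)).re))
          *((1 - ((‖s‖)^2 - (‖t‖)^2)⁻¹)*(1 - (t/(starRingEnd ℂ s)).re))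
        - (-2*(1 - ((‖s‖)^2 - (‖t‖)^2)⁻¹)*(t/(starRingEnd ℂ s)).im)^2
        = (2*(1 - ((‖s‖)^2 - (‖t‖)^2)⁻¹)/‖s‖)^2
          * ((‖s‖)^2 - (‖t‖)^2) := by
      rw [show 4*((1 - ((‖s‖)^2 - (‖t‖)^2)⁻¹)*(1 + (t/(starRingEnd ℂ s)).re))
          *((1 - ((‖s‖)^2 - (‖t‖)^2)⁻¹)*(1 - (t/(starRingEnd ℂ s)).re))
        - (-2*(1 - ((‖s‖)^2 - (‖t‖)^2)⁻¹)*(t/(starRingEnd ℂ s)).im)^2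
        = 4*(1 - ((‖s‖)^2 - (‖t‖)^2)⁻¹)^2
            *(1 - ((t/(starRingEnd ℂ s)).re^2 + (t/(starRingEnd ℂ s)).im^2)) by ring, hγ]
      field_simp
      ring
    have hs4 : Real.sqrt (4*(((‖s‖)^2 - (‖t‖)^2)/(‖s‖)^2))
        = 2/‖s‖ * Real.sqrt ((‖s‖)^2 - (‖t‖)^2) := by
      rw [show 4*(((‖s‖)^2 - (‖t‖)^2)/(‖s‖)^2)
          = (2/‖s‖)^2 * ((‖s‖)^2 - (‖t‖)^2) by ring,
        Real.sqrt_mul (sq_nonneg _), Real.sqrt_sq (by positivity)]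
    have hs4' : Real.sqrt (4*((1 - ((‖s‖)^2 - (‖t‖)^2)⁻¹)*(1 + (t/(starRingEnd ℂ s)).re))
          *((1 - ((‖s‖)^2 - (‖t‖)^2)⁻¹)*(1 - (t/(starRingEnd ℂ s)).re))
        - (-2*(1 - ((‖s‖)^2 - (‖t‖)^2)⁻¹)*(t/(starRingEnd ℂ s)).im)^2)
        = (2*(1 - ((‖s‖)^2 - (‖t‖)^2)⁻¹)/‖s‖)
          * Real.sqrt ((‖s‖)^2 - (‖t‖)^2) := by
      rw [hX'eq, Real.sqrt_mul (sq_nonneg _), Real.sqrt_sq (by positivity)]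
    rw [hX, hs4, hs4']
    rw [show ((1 - ((‖s‖)^2 - (‖t‖)^2)⁻¹)*(1 - (t/(starRingEnd ℂ s)).re)*(0:ℝ)^2
        + (1 - ((‖s‖)^2 - (‖t‖)^2)⁻¹)*(1 + (t/(starRingEnd ℂ s)).re)*(0:ℝ)^2
        - -2*(1 - ((‖s‖)^2 - (‖t‖)^2)⁻¹)*(t/(starRingEnd ℂ s)).im*0*0)
        = (0:ℝ) by ring, zero_div, Real.exp_zero]
    have hsqK : Real.sqrt ((‖s‖)^2 - (‖t‖)^2) ≠ 0 := by positivity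
    have hKK : Real.sqrt ((‖s‖)^2 - (‖t‖)^2)
        * Real.sqrt ((‖s‖)^2 - (‖t‖)^2)
        = (‖s‖)^2 - (‖t‖)^2 := Real.mul_self_sqrt hk0.le
    have hk1 : (‖s‖)^2 - (‖t‖)^2 - 1 ≠ 0 := by
      intro hc; linarith
    have hπ : π ≠ 0 := Real.pi_ne_zero
    field_simp
    linear_combination (-1) * hKK

  refine ⟨main, ?_⟩
  rw [main, Real.sqrt_div (norm_nonneg s)]
end

section
/- Let (s,t) ∈ ℂ² with |s|² = 1 + |t|². The quadratic equation s t̄ γ² + (s² - 1 - |t|²)γ - s t = 0 has a unique solution γ in the open unit disk 𝔻 if and only if |Re s| < 1. Moreover, when |Re s| < 1 and t ≠ 0, writing s = x + iy, the solution is γ = i(-y + sgn(y)√(1-x²))/t̄, and it satisfies |s + γt̄| = 1. -/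
open Complex

set_option maxHeartbeats 1000000 in
theorem unique_gamma_in_disk (s t : ℂ)
    (h : (‖s‖)^2 = 1 + (‖t‖)^2) :
    ((∃! γ : ℂ, ‖γ‖ < 1 ∧
        s * (starRingEnd ℂ t) * γ^2 + (s^2 - 1 - (((‖t‖)^2 : ℝ) : ℂ)) * γ - s * t = 0)
      ↔ |s.re| < 1) ∧
    (|s.re| < 1 → t ≠ 0 →
      (‖(Complex.I * ((-s.im + Real.sign s.im * Real.sqrt (1 - s.re^2) : ℝ) : ℂ)
          / starRingEnd ℂ t)‖ < 1) ∧
      (s * (starRingEnd ℂ t) *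
          (Complex.I * ((-s.im + Real.sign s.im * Real.sqrt (1 - s.re^2) : ℝ) : ℂ)
            / starRingEnd ℂ t)^2
        + (s^2 - 1 - (((‖t‖)^2 : ℝ) : ℂ)) *
          (Complex.I * ((-s.im + Real.sign s.im * Real.sqrt (1 - s.re^2) : ℝ) : ℂ)
            / starRingEnd ℂ t)
        - s * t = 0) ∧
      ‖(s + (Complex.I * ((-s.im + Real.sign s.im * Real.sqrt (1 - s.re^2) : ℝ) : ℂ)
          / starRingEnd ℂ t) * starRingEnd ℂ t)‖ = 1) := by
  have hs2 : s.re^2 + s.im^2 = 1 + (‖t‖)^2 := by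
    rw [← h, Complex.sq_norm, Complex.normSq_apply]; ring
  have hs0 : s ≠ 0 := by
    intro hs
    rw [hs] at h; simp at h
    nlinarith [sq_nonneg (‖t‖), norm_nonneg t]
  have habs : (((‖t‖)^2 : ℝ) : ℂ) = s * (starRingEnd ℂ) s - 1 := by
    rw [Complex.mul_conj, ← Complex.sq_norm]
    rw [h]; push_cast; ring
  have hconj : (starRingEnd ℂ) s = s - 2*(s.im:ℂ) * I := by
    have h2 := Complex.sub_conj s
    push_cast at h2
    linear_combination -h2
  have hkey : ∀ γ : ℂ, s * (starRingEnd ℂ t) * γ^2 + (s^2 - 1 - (((‖t‖)^2 : ℝ) : ℂ)) * γ - s * t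
      = s * ((starRingEnd ℂ t) * γ^2 + 2*(s.im:ℂ)*I*γ - t) := by
    intro γ
    rw [habs, hconj]; ring
  have hQ : ∀ γ : ℂ, (s * (starRingEnd ℂ t) * γ^2 + (s^2 - 1 - (((‖t‖)^2 : ℝ) : ℂ)) * γ - s * t = 0)
      ↔ ((starRingEnd ℂ t) * γ^2 + 2*(s.im:ℂ)*I*γ - t = 0) := by
    intro γ
    rw [hkey, mul_eq_zero]
    simp [hs0]
  have hyne : |s.re| < 1 → s.im ≠ 0 := by
    intro hx hy
    obtain ⟨hx1, hx2⟩ := abs_lt.mp hx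
    rw [hy] at hs2
    nlinarith [sq_nonneg (‖t‖)]
  -- main block: |Re s| < 1 and t ≠ 0
  have main : |s.re| < 1 → t ≠ 0 →
      (∀ γ : ℂ, ‖γ‖ < 1 →
        ((starRingEnd ℂ t) * γ^2 + 2*(s.im:ℂ)*I*γ - t = 0) →
        γ = I * ((-s.im + Real.sign s.im * Real.sqrt (1 - s.re^2) : ℝ) : ℂ) / starRingEnd ℂ t) ∧
      (‖(I * ((-s.im + Real.sign s.im * Real.sqrt (1 - s.re^2) : ℝ) : ℂ) / starRingEnd ℂ t)‖ < 1) ∧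
      ((starRingEnd ℂ t) * (I * ((-s.im + Real.sign s.im * Real.sqrt (1 - s.re^2) : ℝ) : ℂ) / starRingEnd ℂ t)^2
        + 2*(s.im:ℂ)*I*(I * ((-s.im + Real.sign s.im * Real.sqrt (1 - s.re^2) : ℝ) : ℂ) / starRingEnd ℂ t) - t = 0) ∧
      ‖(s + (I * ((-s.im + Real.sign s.im * Real.sqrt (1 - s.re^2) : ℝ) : ℂ) / starRingEnd ℂ t) * starRingEnd ℂ t)‖ = 1 := by
    intro hx ht
    obtain ⟨hxl, hxr⟩ := abs_lt.mp hx
    have hy : s.im ≠ 0 := hyne hx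
    have ht0 : 0 < ‖t‖ := norm_pos_iff.mpr ht
    have htc : (starRingEnd ℂ) t ≠ 0 := by simpa using ht
    have hx2 : 0 < 1 - s.re^2 := by nlinarith
    have ha2 : (Real.sqrt (1 - s.re^2))^2 = 1 - s.re^2 := Real.sq_sqrt hx2.le
    have ha0 : 0 < Real.sqrt (1 - s.re^2) := Real.sqrt_pos.mpr hx2
    set a := Real.sqrt (1 - s.re^2) with ha_def
    set e := Real.sign s.im with he_def
    have he2 : e^2 = 1 := by
      rcases lt_or_gt_of_ne hy with h'|h'
      · rw [he_def, Real.sign_of_neg h']; norm_num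
      · rw [he_def, Real.sign_of_pos h']; norm_num
    have hey : e * s.im = |s.im| := by
      rcases lt_or_gt_of_ne hy with h'|h'
      · rw [he_def, Real.sign_of_neg h', abs_of_neg h']; ring
      · rw [he_def, Real.sign_of_pos h', abs_of_pos h']; ring
    have htt : (‖t‖)^2 = s.re^2 + s.im^2 - 1 := by linarith
    have httpos : 0 < s.re^2 + s.im^2 - 1 := by
      rw [← htt]; positivity
    set A : ℝ := -s.im + e*a with hA_def
    set B : ℝ := -s.im - e*a with hB_def
    have hAB : A*B = (‖t‖)^2 := by
      rw [htt, hA_def, hB_def]; nlinarith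
    have hABc : (A:ℂ)*(B:ℂ) = t * (starRingEnd ℂ) t := by
      rw [Complex.mul_conj]
      norm_cast
      rw [hAB, Complex.sq_norm]
    have hApBc : (A:ℂ)+(B:ℂ) = -2*(s.im:ℂ) := by
      rw [hA_def, hB_def]; push_cast; ring
    have hfac : ∀ γ : ℂ, (starRingEnd ℂ t) * ((starRingEnd ℂ t) * γ^2 + 2*(s.im:ℂ)*I*γ - t)
        = ((starRingEnd ℂ t)*γ - I*(A:ℂ)) * ((starRingEnd ℂ t)*γ - I*(B:ℂ)) := by
      intro γ
      linear_combination (I * (starRingEnd ℂ t) * γ) * hApBc + hABc - (A:ℂ)*(B:ℂ) * Complex.I_sq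
    have hcan : ∀ X : ℂ, (starRingEnd ℂ t) * (X / (starRingEnd ℂ t)) = X := by
      intro X; field_simp
    have habsroot : ∀ δ : ℝ, ‖(I*(δ:ℂ)/(starRingEnd ℂ) t)‖ = |δ| / ‖t‖ := by
      intro δ; simp [map_div₀, Complex.norm_conj, Complex.norm_real]
    have hya : a < |s.im| := by nlinarith [_root_.sq_abs s.im, abs_nonneg s.im]
    have hA2 : A^2 < (‖t‖)^2 := by
      rw [htt, hA_def]
      nlinarith [mul_pos ha0 (sub_pos.mpr hya)]
    have hB2 : (‖t‖)^2 ≤ B^2 := by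
      rw [htt, hB_def]
      nlinarith [mul_nonneg ha0.le (abs_nonneg s.im)]
    have hrootA : ‖(I*(A:ℂ)/(starRingEnd ℂ) t)‖ < 1 := by
      rw [habsroot, div_lt_one ht0]
      nlinarith [abs_nonneg A, _root_.sq_abs A]
    have hrootB : ¬ ‖(I*(B:ℂ)/(starRingEnd ℂ) t)‖ < 1 := by
      rw [habsroot, not_lt, le_div_iff₀ ht0, one_mul]
      nlinarith [abs_nonneg B, _root_.sq_abs B]
    have hQA : (starRingEnd ℂ t) * (I*(A:ℂ)/(starRingEnd ℂ) t)^2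
        + 2*(s.im:ℂ)*I*(I*(A:ℂ)/(starRingEnd ℂ) t) - t = 0 := by
      have h2 := hfac (I*(A:ℂ)/(starRingEnd ℂ) t)
      rw [hcan, sub_self, zero_mul] at h2
      exact (mul_eq_zero.mp h2).resolve_left htc
    refine ⟨?_, hrootA, hQA, ?_⟩
    · intro γ hγlt hγeq
      have h2 : ((starRingEnd ℂ t)*γ - I*(A:ℂ)) * ((starRingEnd ℂ t)*γ - I*(B:ℂ)) = 0 := by
        rw [← hfac, hγeq, mul_zero]
      rcases mul_eq_zero.mp h2 with h3|h3
      · rw [eq_div_iff htc]; linear_combination h3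
      · exfalso
        apply hrootB
        have h4 : γ = I*(B:ℂ)/(starRingEnd ℂ) t := by
          rw [eq_div_iff htc]; linear_combination h3
        rwa [← h4]
    · rw [div_mul_cancel₀ _ htc]
      have hre : (s + I*(A:ℂ)).re = s.re := by simp
      have him : (s + I*(A:ℂ)).im = e * a := by
        simp [hA_def]
      have hsq : (‖(s + I*(A:ℂ))‖)^2 = 1 := by
        rw [Complex.sq_norm, Complex.normSq_apply, hre, him]
        nlinarith
      nlinarith [norm_nonneg (s + I*(A:ℂ)), sq_nonneg (‖(s + I*(A:ℂ))‖ - 1),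
        sq_nonneg (‖(s + I*(A:ℂ))‖ + 1)]
  constructor
  · constructor
    · -- ∃! → |Re s| < 1
      intro hex
      by_contra hx
      push_neg at hx
      have hx1 : 1 ≤ s.re^2 := by nlinarith [_root_.sq_abs s.re]
      by_cases ht : t = 0
      · subst ht
        have hy2 : s.im^2 = 0 := by
          simp at hs2
          nlinarith
        have hy0 : s.im = 0 := by
          exact pow_eq_zero_iff two_ne_zero |>.mp hy2
        obtain ⟨γ, _, huniq⟩ := hex
        have h0 : (0:ℂ) = γ := by
          apply huniq
          refine ⟨by simp, ?_⟩
          rw [hQ]; simp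
        have h1 : (1/2:ℂ) = γ := by
          apply huniq
          refine ⟨by norm_num, ?_⟩
          rw [hQ]; simp [hy0]
        rw [← h0] at h1
        norm_num at h1
      · -- t ≠ 0, |Re s| ≥ 1 : both roots on circle
        obtain ⟨γ, ⟨hγlt, hγeq⟩, _⟩ := hex
        rw [hQ] at hγeq
        have ht0 : 0 < ‖t‖ := norm_pos_iff.mpr ht
        have htc : (starRingEnd ℂ) t ≠ 0 := by simpa using ht
        have hb2 : (Real.sqrt (s.re^2 - 1))^2 = s.re^2 - 1 := Real.sq_sqrt (by linarith)
        set b := Real.sqrt (s.re^2 - 1) with hb_def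
        have hbc : ((b:ℂ))^2 + ((s.im:ℂ))^2 = t * (starRingEnd ℂ) t := by
          rw [Complex.mul_conj]
          norm_cast
          rw [hb2, ← Complex.sq_norm]
          linarith
        have hfac2 : (starRingEnd ℂ t) * ((starRingEnd ℂ t) * γ^2 + 2*(s.im:ℂ)*I*γ - t)
            = ((starRingEnd ℂ t)*γ - ((b:ℂ) - I*(s.im:ℂ))) * ((starRingEnd ℂ t)*γ - (-(b:ℂ) - I*(s.im:ℂ))) := by
          linear_combination hbc - (s.im:ℂ)^2 * Complex.I_sq
        have h2 : ((starRingEnd ℂ t)*γ - ((b:ℂ) - I*(s.im:ℂ))) * ((starRingEnd ℂ t)*γ - (-(b:ℂ) - I*(s.im:ℂ))) = 0 := by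
          rw [← hfac2, hγeq, mul_zero]
        have habsC : ∀ c : ℝ, c^2 = s.re^2 - 1 → ‖((c:ℂ) - I*(s.im:ℂ))‖ = ‖t‖ := by
          intro c hc
          have h5 : (‖((c:ℂ) - I*(s.im:ℂ))‖)^2 = (‖t‖)^2 := by
            rw [Complex.sq_norm, Complex.normSq_apply]
            simp only [Complex.sub_re, Complex.sub_im, Complex.ofReal_re, Complex.ofReal_im,
              Complex.mul_re, Complex.mul_im, Complex.I_re, Complex.I_im]
            nlinarith
          nlinarith [norm_nonneg ((c:ℂ) - I*(s.im:ℂ)), ht0]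
        have hb2' : (-b)^2 = s.re^2 - 1 := by rw [neg_pow]; simp [hb2]
        have hone : ‖γ‖ = 1 := by
          rcases mul_eq_zero.mp h2 with h3|h3
          · have h4 : γ = ((b:ℂ) - I*(s.im:ℂ)) / (starRingEnd ℂ) t := by
              rw [eq_div_iff htc]; linear_combination h3
            rw [h4, norm_div, Complex.norm_conj, habsC b hb2, div_self ht0.ne']
          · have h4 : γ = (-(b:ℂ) - I*(s.im:ℂ)) / (starRingEnd ℂ) t := by
              rw [eq_div_iff htc]; linear_combination h3
            have h6 : (-(b:ℂ) - I*(s.im:ℂ)) = (((-b : ℝ)):ℂ) - I*(s.im:ℂ) := by push_cast; ring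
            rw [h4, h6, norm_div, Complex.norm_conj, habsC (-b) hb2', div_self ht0.ne']
        rw [hone] at hγlt
        exact lt_irrefl 1 hγlt
    · -- |Re s| < 1 → ∃!
      intro hx
      by_cases ht : t = 0
      · have hy : s.im ≠ 0 := hyne hx
        refine ⟨0, ⟨by simp, ?_⟩, ?_⟩
        · rw [hQ]; simp [ht]
        · rintro γ ⟨_, hγeq⟩
          rw [hQ] at hγeq
          subst ht
          simp only [map_zero, zero_mul, sub_zero, zero_add] at hγeq
          have hic : (2:ℂ)*(s.im:ℂ)*I ≠ 0 := by
            simp [Complex.ofReal_ne_zero.mpr hy, I_ne_zero]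
          exact (mul_eq_zero.mp hγeq).resolve_left hic
      · obtain ⟨huniq, hlt, hQr, _⟩ := main hx ht
        refine ⟨_, ⟨hlt, ?_⟩, ?_⟩
        · rw [hQ]; exact hQr
        · rintro γ ⟨h1, h2⟩
          exact huniq γ h1 ((hQ γ).mp h2)
  · intro hx ht
    obtain ⟨_, hlt, hQr, habs1⟩ := main hx ht
    refine ⟨hlt, ?_, habs1⟩
    rw [hQ]
    exact hQr
end

section
/- Let μ ∈ ℂ with Re μ > 0 and let n be a nonnegative integer. Then for all z ∈ ℂ, ∫_ℝ xⁿ e^{-μ(x+z)²} dx = c₀zⁿ + c₁z^{n-1} + ⋯ + c_n, where c_k = 0 for odd k, and c_k = (-1)^{n-k} n! Γ((k+1)/2) / (k!(n-k)!(√μ)^{k+1}) for even k. In particular the integral is a polynomial in z of degree n with leading coefficient (-1)ⁿ√π/√μ. -/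
open MeasureTheory Complex

namespace GaussianMomentAux

open Real Filter Finset

lemma csqrt_sq {μ : ℂ} (hμ : μ ≠ 0) : csqrt μ ^ 2 = μ := by
  rw [csqrt, sq, ← Complex.cpow_add _ _ hμ]
  norm_num

lemma csqrt_ne_zero {μ : ℂ} (hμ : μ ≠ 0) : csqrt μ ≠ 0 := by
  intro h
  apply hμ
  rw [← csqrt_sq hμ, h]
  ring

lemma abs_pow_le (n : ℕ) (x : ℝ) :
    |x| ^ n ≤ (n.factorial : ℝ) * (Real.exp x + Real.exp (-x)) := by
  have h1 : |x| ^ n / (n.factorial : ℝ) ≤ Real.exp |x| := by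
    calc |x| ^ n / (n.factorial : ℝ)
        ≤ ∑ i ∈ Finset.range (n+1), |x| ^ i / (i.factorial : ℝ) :=
          Finset.single_le_sum (f := fun i => |x| ^ i / (i.factorial : ℝ))
            (fun i _ => by positivity) (Finset.self_mem_range_succ n)
      _ ≤ Real.exp |x| := Real.sum_le_exp_of_nonneg (abs_nonneg x) (n+1)
  have h2 : Real.exp |x| ≤ Real.exp x + Real.exp (-x) := by
    rcases abs_cases x with ⟨h, _⟩ | ⟨h, _⟩
    · rw [h]; nlinarith [Real.exp_pos (-x)]
    · rw [h]; nlinarith [Real.exp_pos x]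
  have hf : (0:ℝ) < (n.factorial : ℝ) := by exact_mod_cast n.factorial_pos
  calc |x| ^ n = (n.factorial : ℝ) * (|x| ^ n / (n.factorial : ℝ)) := by field_simp
    _ ≤ (n.factorial : ℝ) * (Real.exp x + Real.exp (-x)) :=
        mul_le_mul_of_nonneg_left (h1.trans h2) hf.le

lemma integrable_pow_mul_cexp {b : ℂ} (hb : b.re < 0) (c d : ℂ) (n : ℕ) :
    Integrable fun x : ℝ => (x : ℂ) ^ n * Complex.exp (b * (x:ℂ) ^ 2 + c * (x:ℂ) + d) := by
  have g1 := (integrable_cexp_quadratic' hb (c + 1) d).norm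
  have g2 := (integrable_cexp_quadratic' hb (c - 1) d).norm
  refine Integrable.mono' ((g1.add g2).const_mul (n.factorial : ℝ)) ?_ ?_
  · apply Continuous.aestronglyMeasurable
    fun_prop
  · filter_upwards with x
    have hre : ∀ (c : ℂ), (b * (x:ℂ) ^ 2 + c * (x:ℂ) + d).re
        = b.re * x ^ 2 + c.re * x + d.re := by
      intro c
      simp [Complex.add_re, Complex.mul_re, ← Complex.ofReal_pow]
    rw [norm_mul, norm_pow, Complex.norm_exp,
      Complex.norm_real, Real.norm_eq_abs, hre]
    simp only [Pi.add_apply]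
    have e1 : ‖Complex.exp (b * (x:ℂ)^2 + (c+1) * (x:ℂ) + d)‖
        = Real.exp (b.re * x ^ 2 + c.re * x + d.re) * Real.exp x := by
      rw [Complex.norm_exp, hre, ← Real.exp_add]
      congr 1
      simp [Complex.add_re]
      ring
    have e2 : ‖Complex.exp (b * (x:ℂ)^2 + (c-1) * (x:ℂ) + d)‖
        = Real.exp (b.re * x ^ 2 + c.re * x + d.re) * Real.exp (-x) := by
      rw [Complex.norm_exp, hre, ← Real.exp_add]
      congr 1
      simp [Complex.sub_re]
      ring
    rw [e1, e2]
    calc |x| ^ n * Real.exp (b.re * x ^ 2 + c.re * x + d.re)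
        ≤ ((n.factorial : ℝ) * (Real.exp x + Real.exp (-x)))
            * Real.exp (b.re * x ^ 2 + c.re * x + d.re) :=
          mul_le_mul_of_nonneg_right (abs_pow_le n x) (Real.exp_pos _).le
      _ = (n.factorial : ℝ) * (Real.exp (b.re * x ^ 2 + c.re * x + d.re) * Real.exp x
            + Real.exp (b.re * x ^ 2 + c.re * x + d.re) * Real.exp (-x)) := by ring

lemma hasDerivAt_gauss (μ z : ℂ) (x : ℝ) :
    HasDerivAt (fun x : ℝ => Complex.exp (-μ * ((x:ℂ) + z)^2))
      (-2*μ*((x:ℂ)+z) * Complex.exp (-μ*((x:ℂ)+z)^2)) x := by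
  have h : HasDerivAt (fun w : ℂ => Complex.exp (-μ * (w + z)^2))
      (-2*μ*((x:ℂ)+z) * Complex.exp (-μ*((x:ℂ)+z)^2)) (x:ℂ) := by
    have h1 : HasDerivAt (fun w : ℂ => -μ * (w + z)^2)
        (-μ * (2 * ((x:ℂ)+z))) (x:ℂ) := by
      simpa using (((hasDerivAt_id ((x:ℂ))).add_const z).pow 2).const_mul (-μ)
    have h2 := h1.cexp
    exact h2.congr_deriv (by ring)
  exact h.comp_ofReal

lemma expand (μ z : ℂ) (x : ℝ) :
    -μ * ((x:ℂ) + z)^2 = -μ * (x:ℂ)^2 + (-(2*μ*z)) * (x:ℂ) + (-(μ*z^2)) := by ring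

lemma integrable_J {μ : ℂ} (hμ : 0 < μ.re) (z : ℂ) (k : ℕ) :
    Integrable fun x : ℝ => (x:ℂ)^k * Complex.exp (-μ * ((x:ℂ)+z)^2) := by
  have hb : (-μ).re < 0 := by simpa using hμ
  exact (integrable_pow_mul_cexp hb (-(2*μ*z)) (-(μ*z^2)) k).congr
    (Filter.Eventually.of_forall fun x => by simp only [← expand μ z x])

lemma J0 {μ : ℂ} (hμ : 0 < μ.re) (z : ℂ) :
    ∫ x : ℝ, Complex.exp (-μ * ((x:ℂ)+z)^2) = ((π:ℂ)/μ) ^ ((1:ℂ)/2) := by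
  have hμ0 : μ ≠ 0 := fun h => by rw [h] at hμ; simp at hμ
  have hb : (-μ).re < 0 := by simpa using hμ
  calc ∫ x : ℝ, Complex.exp (-μ * ((x:ℂ)+z)^2)
      = ∫ x : ℝ, Complex.exp (-μ * (x:ℂ)^2 + (-(2*μ*z)) * (x:ℂ) + (-(μ*z^2))) := by
        congr 1
        funext x
        rw [expand]
    _ = (π / -(-μ)) ^ (1/2 : ℂ)
          * Complex.exp (-(μ*z^2) - (-(2*μ*z))^2/(4*(-μ))) :=
        integral_cexp_quadratic hb _ _
    _ = ((π:ℂ)/μ) ^ ((1:ℂ)/2) := by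
        rw [neg_neg]
        have h0 : -(μ*z^2) - (-(2*μ*z))^2/(4*(-μ)) = 0 := by
          field_simp
          ring
        rw [h0, Complex.exp_zero, mul_one]

lemma cpow_pi_div {μ : ℂ} (hμ : 0 < μ.re) :
    ((π:ℂ)/μ) ^ ((1:ℂ)/2) = (π:ℂ) ^ ((1:ℂ)/2) / csqrt μ := by
  have hμ0 : μ ≠ 0 := fun h => by rw [h] at hμ; simp at hμ
  have harg : μ.arg ≠ π := by
    intro h
    rw [Complex.arg_eq_pi_iff] at h
    linarith [h.1]
  have hπ : (π:ℂ) ≠ 0 := by exact_mod_cast Real.pi_ne_zero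
  have hπμ : (π:ℂ)/μ ≠ 0 := div_ne_zero hπ hμ0
  have hlog : Complex.log ((π:ℂ)/μ) + Complex.log μ = ((Real.log π : ℝ) : ℂ) := by
    apply Complex.ext
    · simp only [Complex.add_re, Complex.log_re, Complex.ofReal_re]
      rw [norm_div, Complex.norm_real, Real.norm_eq_abs, abs_of_pos Real.pi_pos,
        Real.log_div Real.pi_ne_zero (norm_ne_zero_iff.mpr hμ0)]
      ring
    · simp only [Complex.add_im, Complex.log_im, Complex.ofReal_im]
      rw [div_eq_mul_inv, Complex.arg_real_mul _ Real.pi_pos, Complex.arg_inv, if_neg harg]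
      ring
  rw [eq_div_iff (csqrt_ne_zero hμ0)]
  rw [csqrt, Complex.cpow_def_of_ne_zero hπμ, Complex.cpow_def_of_ne_zero hμ0,
    Complex.cpow_def_of_ne_zero hπ, ← Complex.exp_add]
  congr 1
  rw [← add_mul, hlog, Complex.ofReal_log Real.pi_pos.le]

noncomputable def gcoef (μ : ℂ) (k : ℕ) : ℂ :=
  if Even k then Complex.Gamma (((k:ℂ)+1)/2) / (csqrt μ)^(k+1) else 0

lemma gcoef_zero {μ : ℂ} (hμ : 0 < μ.re) : gcoef μ 0 = ((π:ℂ)/μ) ^ ((1:ℂ)/2) := by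
  rw [gcoef, if_pos (by decide), cpow_pi_div hμ]
  norm_num [Complex.Gamma_one_half_eq]

lemma gcoef_one (μ : ℂ) : gcoef μ 1 = 0 := by
  rw [gcoef, if_neg (by decide)]

lemma gcoef_rec {μ : ℂ} (hμ : 0 < μ.re) (k : ℕ) :
    gcoef μ (k+2) = (((k:ℂ)+1) * (2*μ)⁻¹) * gcoef μ k := by
  have hμ0 : μ ≠ 0 := fun h => by rw [h] at hμ; simp at hμ
  have hs := csqrt_ne_zero hμ0
  by_cases h : Even k
  · rw [gcoef, gcoef, if_pos (by simpa [Nat.even_add] using h), if_pos h]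
    have harg : (((k+2:ℕ):ℂ)+1)/2 = ((k:ℂ)+1)/2 + 1 := by push_cast; ring
    have hne : ((k:ℂ)+1)/2 ≠ 0 :=
      div_ne_zero (Nat.cast_add_one_ne_zero k) two_ne_zero
    rw [harg, Complex.Gamma_add_one _ hne]
    have hpow : (csqrt μ)^(k+2+1) = (csqrt μ)^(k+1) * μ := by
      have : (csqrt μ)^(k+2+1) = (csqrt μ)^(k+1) * (csqrt μ)^2 := by ring
      rw [this, csqrt_sq hμ0]
    rw [hpow]
    rw [div_eq_iff (mul_ne_zero (pow_ne_zero _ hs) hμ0)]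
    field_simp
  · rw [gcoef, gcoef, if_neg (by simpa [Nat.even_add] using h), if_neg h, mul_zero]

variable {μ : ℂ}

lemma ibp0 (hμ : 0 < μ.re) (z : ℂ) :
    ∫ x : ℝ, ((x:ℂ)+z) * Complex.exp (-μ * ((x:ℂ)+z)^2) = 0 := by
  have hμ0 : μ ≠ 0 := fun h => by rw [h] at hμ; simp at hμ
  have h2μ : (2*μ) ≠ 0 := by simp [hμ0]
  have key := MeasureTheory.integral_mul_deriv_eq_deriv_mul_of_integrable
    (u := fun _ : ℝ => (1:ℂ)) (u' := fun _ : ℝ => (0:ℂ))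
    (v := fun x : ℝ => -(2*μ)⁻¹ * Complex.exp (-μ * ((x:ℂ)+z)^2))
    (v' := fun x : ℝ => ((x:ℂ)+z) * Complex.exp (-μ * ((x:ℂ)+z)^2))
    (fun x _ => hasDerivAt_const x 1)
    (fun x _ => by
      have h := (hasDerivAt_gauss μ z x).const_mul (-(2*μ)⁻¹)
      convert h using 1
      field_simp)
    ?_ ?_ ?_
  · simpa using key
  · apply Integrable.congr (((integrable_J hμ z 1).add ((integrable_J hμ z 0).const_mul z)))
    filter_upwards with x
    simp only [Pi.mul_apply, Pi.add_apply]
    ring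
  · exact (integrable_zero ℝ ℂ (volume : Measure ℝ)).congr
      (Filter.Eventually.of_forall fun x => by simp [Pi.mul_apply])
  · apply Integrable.congr ((integrable_J hμ z 0).const_mul (-(2*μ)⁻¹))
    filter_upwards with x
    simp only [Pi.mul_apply, Pi.add_apply]
    ring

lemma ibpS (hμ : 0 < μ.re) (z : ℂ) (m : ℕ) :
    ∫ x : ℝ, (x:ℂ)^(m+1) * (((x:ℂ)+z) * Complex.exp (-μ * ((x:ℂ)+z)^2))
      = ((m:ℂ)+1) * (2*μ)⁻¹ * ∫ x : ℝ, (x:ℂ)^m * Complex.exp (-μ * ((x:ℂ)+z)^2) := by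
  have hμ0 : μ ≠ 0 := fun h => by rw [h] at hμ; simp at hμ
  have key := MeasureTheory.integral_mul_deriv_eq_deriv_mul_of_integrable
    (u := fun x : ℝ => (x:ℂ)^(m+1)) (u' := fun x : ℝ => ((m:ℂ)+1) * (x:ℂ)^m)
    (v := fun x : ℝ => -(2*μ)⁻¹ * Complex.exp (-μ * ((x:ℂ)+z)^2))
    (v' := fun x : ℝ => ((x:ℂ)+z) * Complex.exp (-μ * ((x:ℂ)+z)^2))
    (fun x _ => by
      have h := (hasDerivAt_pow (m+1) ((x:ℂ))).comp_ofReal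
      exact h.congr_deriv (by rw [Nat.add_sub_cancel]; push_cast; ring))
    (fun x _ => by
      have h := (hasDerivAt_gauss μ z x).const_mul (-(2*μ)⁻¹)
      convert h using 1
      field_simp)
    ?_ ?_ ?_
  · rw [key]
    have : ∀ x : ℝ, ((m:ℂ)+1) * (x:ℂ)^m * (-(2*μ)⁻¹ * Complex.exp (-μ * ((x:ℂ)+z)^2))
        = (-(((m:ℂ)+1) * (2*μ)⁻¹)) * ((x:ℂ)^m * Complex.exp (-μ * ((x:ℂ)+z)^2)) := by
      intro x; ring
    simp_rw [this]
    rw [MeasureTheory.integral_const_mul]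
    ring
  · apply Integrable.congr
      (((integrable_J hμ z (m+2)).add ((integrable_J hμ z (m+1)).const_mul z)))
    filter_upwards with x
    simp only [Pi.mul_apply, Pi.add_apply]
    ring
  · apply Integrable.congr ((integrable_J hμ z m).const_mul (-(((m:ℂ)+1) * (2*μ)⁻¹)))
    filter_upwards with x
    simp only [Pi.mul_apply, Pi.add_apply]
    ring
  · apply Integrable.congr ((integrable_J hμ z (m+1)).const_mul (-(2*μ)⁻¹))
    filter_upwards with x
    simp only [Pi.mul_apply, Pi.add_apply]
    ring

lemma J1 (hμ : 0 < μ.re) (z : ℂ) :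
    ∫ x : ℝ, (x:ℂ)^1 * Complex.exp (-μ * ((x:ℂ)+z)^2)
      = -z * ∫ x : ℝ, Complex.exp (-μ * ((x:ℂ)+z)^2) := by
  have h := ibp0 hμ z
  have hsplit : ∫ x : ℝ, ((x:ℂ)+z) * Complex.exp (-μ * ((x:ℂ)+z)^2)
      = (∫ x : ℝ, (x:ℂ)^1 * Complex.exp (-μ * ((x:ℂ)+z)^2))
        + z * ∫ x : ℝ, Complex.exp (-μ * ((x:ℂ)+z)^2) := by
    rw [← MeasureTheory.integral_const_mul, ← MeasureTheory.integral_add (integrable_J hμ z 1)]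
    · congr 1
      funext x
      simp
      ring
    · exact (integrable_J hμ z 0).const_mul z |>.congr
        (Filter.Eventually.of_forall fun x => by simp)
  rw [hsplit] at h
  linear_combination h

lemma Jrec (hμ : 0 < μ.re) (z : ℂ) (m : ℕ) :
    ∫ x : ℝ, (x:ℂ)^(m+2) * Complex.exp (-μ * ((x:ℂ)+z)^2)
      = -z * (∫ x : ℝ, (x:ℂ)^(m+1) * Complex.exp (-μ * ((x:ℂ)+z)^2))
        + ((m:ℂ)+1) * (2*μ)⁻¹ * ∫ x : ℝ, (x:ℂ)^m * Complex.exp (-μ * ((x:ℂ)+z)^2) := by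
  have h := ibpS hμ z m
  have hsplit : ∫ x : ℝ, (x:ℂ)^(m+1) * (((x:ℂ)+z) * Complex.exp (-μ * ((x:ℂ)+z)^2))
      = (∫ x : ℝ, (x:ℂ)^(m+2) * Complex.exp (-μ * ((x:ℂ)+z)^2))
        + z * ∫ x : ℝ, (x:ℂ)^(m+1) * Complex.exp (-μ * ((x:ℂ)+z)^2) := by
    rw [← MeasureTheory.integral_const_mul, ← MeasureTheory.integral_add (integrable_J hμ z (m+2))]
    · congr 1
      funext x
      ring
    · exact ((integrable_J hμ z (m+1)).const_mul z)
  rw [hsplit] at h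
  linear_combination h

lemma binom_id (hμ : 0 < μ.re) (z : ℂ) (n : ℕ) :
    ∑ k ∈ Finset.range (n+3), (((n+2).choose k : ℕ) : ℂ) * (-z)^(n+2-k) * gcoef μ k
      = -z * ∑ k ∈ Finset.range (n+2), (((n+1).choose k : ℕ) : ℂ) * (-z)^(n+1-k) * gcoef μ k
        + ((n:ℂ)+1) * (2*μ)⁻¹
          * ∑ k ∈ Finset.range (n+1), ((n.choose k : ℕ) : ℂ) * (-z)^(n-k) * gcoef μ k := by
  have hA : -z * ∑ k ∈ Finset.range (n+2), (((n+1).choose k : ℕ) : ℂ) * (-z)^(n+1-k) * gcoef μ k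
      = ∑ k ∈ Finset.range (n+2), (((n+1).choose k : ℕ) : ℂ) * (-z)^(n+2-k) * gcoef μ k := by
    rw [Finset.mul_sum]
    apply Finset.sum_congr rfl
    intro k hk
    have hk' : k ≤ n+1 := Nat.lt_succ_iff.mp (Finset.mem_range.mp hk)
    have he : n+2-k = (n+1-k)+1 := by omega
    rw [he, pow_succ]
    ring
  have hB : ((n:ℂ)+1) * (2*μ)⁻¹
        * ∑ k ∈ Finset.range (n+1), ((n.choose k : ℕ) : ℂ) * (-z)^(n-k) * gcoef μ k
      = ∑ k ∈ Finset.range (n+2), (((n+1).choose k : ℕ) : ℂ) * (-z)^(n+1-k) * gcoef μ (k+1) := by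
    rw [Finset.sum_range_succ'
      (f := fun k => (((n+1).choose k : ℕ) : ℂ) * (-z)^(n+1-k) * gcoef μ (k+1))]
    rw [gcoef_one, mul_zero, add_zero, Finset.mul_sum]
    apply Finset.sum_congr rfl
    intro k hk
    have hk' : k ≤ n := Nat.lt_succ_iff.mp (Finset.mem_range.mp hk)
    have he : n+1-(k+1) = n-k := by omega
    rw [he, gcoef_rec hμ k]
    have hch : (((n+1).choose (k+1) : ℕ) : ℂ) * ((k:ℂ)+1) = ((n:ℂ)+1) * ((n.choose k : ℕ) : ℂ) := by
      have h2 : ((n+1) * n.choose k : ℕ) = ((n+1).choose (k+1) * (k+1) : ℕ) := by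
        simpa [Nat.succ_eq_add_one] using Nat.add_one_mul_choose_eq n k
      have h3 : (((n+1) * n.choose k : ℕ) : ℂ) = (((n+1).choose (k+1) * (k+1) : ℕ) : ℂ) := by
        exact_mod_cast congrArg (fun t : ℕ => (t : ℂ)) h2
      push_cast at h3
      linear_combination -h3
    calc ((n:ℂ)+1) * (2*μ)⁻¹ * (((n.choose k : ℕ) : ℂ) * (-z)^(n-k) * gcoef μ k)
        = (((n:ℂ)+1) * ((n.choose k : ℕ) : ℂ)) * ((2*μ)⁻¹ * (-z)^(n-k) * gcoef μ k) := by ring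
      _ = ((((n+1).choose (k+1) : ℕ) : ℂ) * ((k:ℂ)+1)) * ((2*μ)⁻¹ * (-z)^(n-k) * gcoef μ k) := by
          rw [hch]
      _ = (((n+1).choose (k+1) : ℕ) : ℂ) * (-z)^(n-k) * (((k:ℂ)+1) * (2*μ)⁻¹ * gcoef μ k) := by
          ring
  rw [hA, hB]
  rw [Finset.sum_range_succ'
    (f := fun k => (((n+2).choose k : ℕ) : ℂ) * (-z)^(n+2-k) * gcoef μ k)]
  rw [Finset.sum_range_succ'
    (f := fun k => (((n+1).choose k : ℕ) : ℂ) * (-z)^(n+2-k) * gcoef μ k)]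
  have hext : ∑ k ∈ Finset.range (n+2), (((n+1).choose (k+1) : ℕ) : ℂ) * (-z)^(n+2-(k+1)) * gcoef μ (k+1)
      = ∑ k ∈ Finset.range (n+1), (((n+1).choose (k+1) : ℕ) : ℂ) * (-z)^(n+2-(k+1)) * gcoef μ (k+1) := by
    rw [Finset.sum_range_succ]
    have : (n+1).choose (n+2) = 0 := Nat.choose_eq_zero_of_lt (by omega)
    simp [this]
  have hterm : ∀ k, (((n+2).choose (k+1) : ℕ) : ℂ) * (-z)^(n+2-(k+1)) * gcoef μ (k+1)
      = (((n+1).choose k : ℕ) : ℂ) * (-z)^(n+1-k) * gcoef μ (k+1)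
        + (((n+1).choose (k+1) : ℕ) : ℂ) * (-z)^(n+2-(k+1)) * gcoef μ (k+1) := by
    intro k
    have hc : (n+2).choose (k+1) = (n+1).choose k + (n+1).choose (k+1) :=
      Nat.choose_succ_succ (n+1) k
    have he : n+2-(k+1) = n+1-k := by omega
    rw [hc, he]
    push_cast
    ring
  simp_rw [hterm]
  rw [Finset.sum_add_distrib]
  rw [hext]
  have h00 : (((n+2).choose 0 : ℕ) : ℂ) * (-z)^(n+2-0) * gcoef μ 0
      = (((n+1).choose 0 : ℕ) : ℂ) * (-z)^(n+2-0) * gcoef μ 0 := by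
    simp
  rw [h00]
  ring

lemma Jformula (hμ : 0 < μ.re) (z : ℂ) : ∀ n : ℕ,
    ∫ x : ℝ, (x:ℂ)^n * Complex.exp (-μ * ((x:ℂ)+z)^2)
      = ∑ k ∈ Finset.range (n+1), ((n.choose k : ℕ) : ℂ) * (-z)^(n-k) * gcoef μ k := by
  intro n
  induction n using Nat.twoStepInduction with
  | zero =>
    simp only [pow_zero, one_mul]
    rw [J0 hμ z]
    simp [Finset.sum_range_one, gcoef_zero hμ]
  | one =>
    rw [J1 hμ z, J0 hμ z]
    rw [Finset.sum_range_succ, Finset.sum_range_one]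
    rw [gcoef_one, gcoef_zero hμ]
    simp
  | more m ih ih1 =>
    rw [Jrec hμ z m, ih, ih1]
    have := binom_id hμ z m
    calc -z * ∑ k ∈ Finset.range (m+1+1), (((m+1).choose k : ℕ) : ℂ) * (-z)^(m+1-k) * gcoef μ k
          + ((m:ℂ)+1) * (2*μ)⁻¹
            * ∑ k ∈ Finset.range (m+1), ((m.choose k : ℕ) : ℂ) * (-z)^(m-k) * gcoef μ k
        = ∑ k ∈ Finset.range (m+3), (((m+2).choose k : ℕ) : ℂ) * (-z)^(m+2-k) * gcoef μ k := by
          rw [binom_id hμ z m]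
      _ = ∑ k ∈ Finset.range (m+2+1), (((m+2).choose k : ℕ) : ℂ) * (-z)^(m+2-k) * gcoef μ k := rfl

end GaussianMomentAux

open GaussianMomentAux in
theorem gaussian_moment_polynomial (μ : ℂ) (hμ : 0 < μ.re) (n : ℕ) (z : ℂ) :
    ∫ x : ℝ, (x:ℂ)^n * Complex.exp (-μ * ((x:ℂ) + z)^2)
      = ∑ k ∈ Finset.range (n+1),
          (if Even k then
            ((-1:ℂ))^(n-k) * (n.factorial : ℂ) * Complex.Gamma (((k:ℂ)+1)/2) /
              ((k.factorial : ℂ) * ((n-k).factorial : ℂ) * (csqrt μ)^(k+1))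
          else 0) * z^(n-k) := by
  have hμ0 : μ ≠ 0 := fun h => by rw [h] at hμ; simp at hμ
  rw [Jformula hμ z n]
  apply Finset.sum_congr rfl
  intro k hk
  have hkn : k ≤ n := Nat.lt_succ_iff.mp (Finset.mem_range.mp hk)
  by_cases h : Even k
  · rw [GaussianMomentAux.gcoef, if_pos h, if_pos h]
    rw [Nat.cast_choose ℂ hkn]
    rw [neg_pow]
    have h1 : (k.factorial : ℂ) ≠ 0 := by exact_mod_cast k.factorial_ne_zero
    have h2 : ((n-k).factorial : ℂ) ≠ 0 := by exact_mod_cast (n-k).factorial_ne_zero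
    have h3 : (csqrt μ)^(k+1) ≠ 0 := pow_ne_zero _ (csqrt_ne_zero hμ0)
    field_simp
  · rw [GaussianMomentAux.gcoef, if_neg h, if_neg h]
    ring
end
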